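/- arXiv:1504.07257 — 6 statements merged into one kernel-verified Lean document; each statement's English description precedes it below -/
import Mathlib

section
/- Let R be a ring. The following statements are equivalent: (1) C_R is a left Ore set of R and Q_{l,cl}(R) := C_R⁻¹R is a semisimple Artinian ring; (2) R is a semiprime ring, udim(_R R) < ∞, 'C_R = C_R, and 'C_U ≠ ∅ for all uniform left ideals U of R. -/
universe u

namespace Bavula

/-- The set of left regular elements of `R`. -/
def lReg (R : Type u) [Ring R] : Set R := {c : R | ∀ x : R, x * c = 0 → x = 0}

/-- The set of right regular elements of `R`. -/
def rReg (R : Type u) [Ring R] : Set R := {c : R | ∀ x : R, c * x = 0 → x = 0}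

/-- The set of regular elements of `R`. -/
def reg (R : Type u) [Ring R] : Set R := lReg R ∩ rReg R

/-- `S` is a multiplicative set of `R`. -/
def IsMulSet {R : Type u} [Ring R] (S : Set R) : Prop :=
  (1 : R) ∈ S ∧ (∀ a ∈ S, ∀ b ∈ S, a * b ∈ S) ∧ (0 : R) ∉ S

/-- `S` is a left Ore set of `R`. -/
def IsLeftOre {R : Type u} [Ring R] (S : Set R) : Prop :=
  IsMulSet S ∧ ∀ s ∈ S, ∀ r : R, ∃ s' ∈ S, ∃ r' : R, s' * r = r' * s

/-- `S` is a left denominator set of `R`. -/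
def IsLeftDenom {R : Type u} [Ring R] (S : Set R) : Prop :=
  IsLeftOre S ∧ ∀ r : R, ∀ s ∈ S, r * s = 0 → ∃ t ∈ S, t * r = 0

/-- `S` is a right Ore set of `R`. -/
def IsRightOre {R : Type u} [Ring R] (S : Set R) : Prop :=
  IsMulSet S ∧ ∀ s ∈ S, ∀ r : R, ∃ s' ∈ S, ∃ r' : R, r * s' = s * r'

/-- `S` is a right denominator set of `R`. -/
def IsRightDenom {R : Type u} [Ring R] (S : Set R) : Prop :=
  IsRightOre S ∧ ∀ r : R, ∀ s ∈ S, s * r = 0 → ∃ t ∈ S, r * t = 0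

/-- `ass_R(S) = {r ∈ R | s r = 0 for some s ∈ S}`. -/
def ass {R : Type u} [Ring R] (S : Set R) : Set R := {r : R | ∃ s ∈ S, s * r = 0}

/-- `{r ∈ R | r s = 0 for some s ∈ S}` (the right-sided analogue of `ass`). -/
def rass {R : Type u} [Ring R] (S : Set R) : Set R := {r : R | ∃ s ∈ S, r * s = 0}

/-- `S` is a (left) dense subset of `T`. -/
def DenseIn {R : Type u} [Ring R] (S T : Set R) : Prop := ∀ t ∈ T, ∃ r : R, r * t ∈ S

/-- `f : R →+* Q` realizes `Q` as the left localization `S⁻¹R` of `R` at `S`: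
elements of `S` become units, every element of `Q` is a left fraction `(f s)⁻¹ * (f r)`,
and the kernel of `f` is `ass S`. -/
def IsLeftLoc {R : Type u} [Ring R] (S : Set R) {Q : Type u} [Ring Q] (f : R →+* Q) : Prop :=
  (∀ s ∈ S, IsUnit (f s)) ∧
  (∀ q : Q, ∃ s ∈ S, ∃ r : R, f s * q = f r) ∧
  (∀ r : R, f r = 0 ↔ r ∈ ass S)

/-- `π : R →+* Q` realizes `Q` as the quotient of `R` by the set `a`
(in particular, `a` is then a two-sided ideal of `R`). -/
def IsQuotBy {R : Type u} [Ring R] (a : Set R) {Q : Type u} [Ring Q] (π : R →+* Q) : Prop :=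
  Function.Surjective π ∧ ∀ r : R, π r = 0 ↔ r ∈ a

/-- A semiprime ring (no nonzero nilpotent ideals), elementwise: `x R x = 0 → x = 0`. -/
def SemiprimeRing (A : Type u) [Ring A] : Prop := ∀ x : A, (∀ r : A, x * r * x = 0) → x = 0

/-- `a` is a two-sided ideal of `R`, given as a set. -/
def IsIdealSet {R : Type u} [Ring R] (a : Set R) : Prop :=
  (0 : R) ∈ a ∧ (∀ x ∈ a, ∀ y ∈ a, x + y ∈ a) ∧ ∀ r : R, ∀ x ∈ a, r * x ∈ a ∧ x * r ∈ a

/-- `a` is a semiprime (two-sided) ideal of `R`, i.e. `R/a` is a semiprime ring. -/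
def IsSemiprimeIdealSet {R : Type u} [Ring R] (a : Set R) : Prop :=
  IsIdealSet a ∧ ∀ x : R, (∀ r : R, x * r * x ∈ a) → x ∈ a

/-- `a` is a prime (two-sided) ideal of `R`, i.e. `R/a` is a prime ring. -/
def IsPrimeIdealSet {R : Type u} [Ring R] (a : Set R) : Prop :=
  IsIdealSet a ∧ a ≠ Set.univ ∧ ∀ x y : R, (∀ r : R, x * r * y ∈ a) → x ∈ a ∨ y ∈ a

/-- The prime radical of `A`: the intersection of all prime ideals of `A`. -/
def primeRadical (A : Type u) [Ring A] : Set A :=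
  {x : A | ∀ p : Set A, IsPrimeIdealSet p → x ∈ p}

/-- The set of prime ideals of `R` minimal over `a`. -/
def minPrimesOver {R : Type u} [Ring R] (a : Set R) : Set (Set R) :=
  {p : Set R | IsPrimeIdealSet p ∧ a ⊆ p ∧
    ∀ q : Set R, IsPrimeIdealSet q → a ⊆ q → q ⊆ p → q = p}

/-- A simple ring: nontrivial, with no two-sided ideals other than `0` and `A`. -/
def SimpleRing (A : Type u) [Ring A] : Prop :=
  (0 : A) ≠ 1 ∧ ∀ a : Set A, IsIdealSet a → a = {0} ∨ a = Set.univ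

/-- A simple (left) Artinian ring. -/
def SimpleArtinianRing (A : Type u) [Ring A] : Prop := SimpleRing A ∧ IsArtinianRing A

/-- `I` is an essential left ideal of `R`. -/
def EssIdeal {R : Type u} [Ring R] (I : Submodule R R) : Prop :=
  ∀ J : Submodule R R, J ≠ ⊥ → I ⊓ J ≠ ⊥

/-- `N` is an essential submodule of the left ideal `M`. -/
def EssIn {R : Type u} [Ring R] (N M : Submodule R R) : Prop :=
  N ≤ M ∧ ∀ W : Submodule R R, W ≤ M → W ≠ ⊥ → N ⊓ W ≠ ⊥

/-- `U` is a uniform left ideal of `R`. -/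
def UniformIdeal {R : Type u} [Ring R] (U : Submodule R R) : Prop :=
  U ≠ ⊥ ∧ ∀ V W : Submodule R R, V ≤ U → W ≤ U → V ≠ ⊥ → W ≠ ⊥ → V ⊓ W ≠ ⊥

/-- `udim(_A A) < ∞`: there is a finite direct sum of uniform left ideals of `A`
which is an essential left ideal of `A`. -/
def FinUdim (A : Type u) [Ring A] : Prop :=
  ∃ (n : ℕ) (U : Fin (n + 1) → Submodule A A),
    (∀ i, UniformIdeal (U i)) ∧
    (∀ i, U i ⊓ (⨆ j, ⨆ (_ : j ≠ i), U j) = ⊥) ∧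
    EssIdeal (⨆ i, U i)

/-- `'C_V = {v ∈ V | right multiplication by v is injective on V}` for a left ideal `V`. -/
def lRegIn {R : Type u} [Ring R] (V : Submodule R R) : Set R :=
  {v : R | v ∈ V ∧ ∀ x ∈ V, x * v = 0 → x = 0}

/-- The family `P` of subsets of `R` satisfies the ascending chain condition. -/
def AccOnSets {R : Type u} [Ring R] (P : Set (Set R)) : Prop :=
  ∀ f : ℕ → Set R, (∀ n, f n ∈ P) → (∀ n, f n ⊆ f (n + 1)) →
    ∃ N : ℕ, ∀ n : ℕ, N ≤ n → f n = f N

/-- The left annihilator of `X` in `R`. -/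
def lAnn {R : Type u} [Ring R] (X : Set R) : Set R := {r : R | ∀ x ∈ X, r * x = 0}

/-- The right annihilator of `X` in `R`. -/
def rAnn {R : Type u} [Ring R] (X : Set R) : Set R := {r : R | ∀ x ∈ X, x * r = 0}

/-- A left Goldie ring: a.c.c. on left annihilators and finite left uniform dimension. -/
def LeftGoldie (A : Type u) [Ring A] : Prop :=
  AccOnSets {B : Set A | ∃ X : Set A, B = lAnn X} ∧ FinUdim A

/-- The set of maximal left denominator sets of `A`. -/
def maxLeftDenom (A : Type u) [Ring A] : Set (Set A) :=
  {S : Set A | IsLeftDenom S ∧ ∀ T : Set A, IsLeftDenom T → S ⊆ T → S = T}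

/-- `S_p = {c ∈ R | c + p ∈ C_{R/p}}`: the elements regular modulo `p`. -/
def regMod {R : Type u} [Ring R] (p : Set R) : Set R :=
  {c : R | (∀ x : R, x * c ∈ p → x ∈ p) ∧ ∀ x : R, c * x ∈ p → x ∈ p}

/-- `I` is a right ideal of `R`, given as a set. -/
def IsRightIdealSet {R : Type u} [Ring R] (I : Set R) : Prop :=
  (0 : R) ∈ I ∧ (∀ x ∈ I, ∀ y ∈ I, x + y ∈ I) ∧ ∀ x ∈ I, ∀ r : R, x * r ∈ I

/-- The left singular ideal `ζ_l(R, a)` of `R` over `a`. -/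
def leftSingularOver {R : Type u} [Ring R] (a : Set R) : Set R :=
  {r : R | ∃ I : Submodule R R, EssIdeal I ∧ a ⊆ I ∧ ∀ x ∈ I, x * r = 0}

section Tools

variable {R : Type u} [Ring R]

section Mod


variable {M : Type u} [AddCommGroup M] [Module R M]

/-- essential submodule -/
def Ess (N : Submodule R M) : Prop := ∀ X : Submodule R M, X ≠ ⊥ → N ⊓ X ≠ ⊥

/-- uniform submodule -/
def Unif (U : Submodule R M) : Prop :=
  U ≠ ⊥ ∧ ∀ V W : Submodule R M, V ≤ U → W ≤ U → V ≠ ⊥ → W ≠ ⊥ → V ⊓ W ≠ ⊥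

/-- independent family -/
def Indep {ι : Type*} (V : ι → Submodule R M) : Prop :=
  ∀ i, V i ⊓ (⨆ j, ⨆ (_ : j ≠ i), V j) = ⊥

lemma ne_bot_iff' (N : Submodule R M) : N ≠ ⊥ ↔ ∃ x ∈ N, x ≠ 0 := by
  rw [Submodule.ne_bot_iff]

lemma unif_mono {U V : Submodule R M} (hU : Unif U) (hVU : V ≤ U) (hV : V ≠ ⊥) : Unif V :=
  ⟨hV, fun A B hA hB hA' hB' => hU.2 A B (hA.trans hVU) (hB.trans hVU) hA' hB'⟩

variable {M' : Type u} [AddCommGroup M'] [Module R M']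

lemma map_ne_bot {f : M →ₗ[R] M'} {N : Submodule R M} (h : LinearMap.ker f ⊓ N = ⊥)
    (hN : N ≠ ⊥) : N.map f ≠ ⊥ := by
  obtain ⟨x, hx, hx0⟩ := (ne_bot_iff' N).mp hN
  refine (ne_bot_iff' _).mpr ⟨f x, Submodule.mem_map_of_mem hx, fun h0 => hx0 ?_⟩
  have : x ∈ LinearMap.ker f ⊓ N := ⟨LinearMap.mem_ker.mpr h0, hx⟩
  rw [h] at this; simpa using this

lemma unif_map {f : M →ₗ[R] M'} {U : Submodule R M} (h : LinearMap.ker f ⊓ U = ⊥)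
    (hU : Unif U) : Unif (U.map f) := by
  refine ⟨map_ne_bot h hU.1, fun X Y hX hY hX' hY' => ?_⟩
  set X' := Submodule.comap f X ⊓ U with hX'def
  set Y' := Submodule.comap f Y ⊓ U with hY'def
  have hX'b : X' ≠ ⊥ := by
    obtain ⟨x, hx, hx0⟩ := (ne_bot_iff' X).mp hX'
    obtain ⟨u, hu, hux⟩ := hX hx
    refine (ne_bot_iff' _).mpr ⟨u, ⟨?_, hu⟩, ?_⟩
    · simp [Submodule.mem_comap, hux, hx]
    · rintro rfl; apply hx0; rw [← hux]; simp
  have hY'b : Y' ≠ ⊥ := by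
    obtain ⟨y, hy, hy0⟩ := (ne_bot_iff' Y).mp hY'
    obtain ⟨u, hu, huy⟩ := hY hy
    refine (ne_bot_iff' _).mpr ⟨u, ⟨?_, hu⟩, ?_⟩
    · simp [Submodule.mem_comap, huy, hy]
    · rintro rfl; apply hy0; rw [← huy]; simp
  have hZ := hU.2 X' Y' inf_le_right inf_le_right hX'b hY'b
  obtain ⟨z, hz, hz0⟩ := (ne_bot_iff' _).mp hZ
  refine (ne_bot_iff' _).mpr ⟨f z, ⟨hz.1.1, hz.2.1⟩, fun h0 => hz0 ?_⟩
  have : z ∈ LinearMap.ker f ⊓ U := ⟨LinearMap.mem_ker.mpr h0, hz.1.2⟩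
  rw [h] at this; simpa using this

lemma unif_of_map {f : M →ₗ[R] M'} {Y : Submodule R M} (h : LinearMap.ker f ⊓ Y = ⊥)
    (hY : Y ≠ ⊥) (hm : Unif (Y.map f)) : Unif Y := by
  refine ⟨hY, fun X W hX hW hX' hW' => ?_⟩
  have h1 : LinearMap.ker f ⊓ X = ⊥ := by
    rw [eq_bot_iff]; exact le_trans (inf_le_inf_left _ hX) (le_of_eq h)
  have h2 : LinearMap.ker f ⊓ W = ⊥ := by
    rw [eq_bot_iff]; exact le_trans (inf_le_inf_left _ hW) (le_of_eq h)
  have := hm.2 (X.map f) (W.map f) (Submodule.map_mono hX) (Submodule.map_mono hW)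
    (map_ne_bot h1 hX') (map_ne_bot h2 hW')
  obtain ⟨z, ⟨⟨a, ha, hfa⟩, ⟨b, hb, hfb⟩⟩, hz0⟩ := (ne_bot_iff' _).mp this
  have hab : a - b ∈ LinearMap.ker f ⊓ Y :=
    ⟨LinearMap.mem_ker.mpr (by rw [map_sub, hfa, hfb, sub_self]), Y.sub_mem (hX ha) (hW hb)⟩
  rw [h] at hab
  have hab' : a = b := by simpa [sub_eq_zero] using hab
  refine (ne_bot_iff' _).mpr ⟨a, ⟨ha, hab' ▸ hb⟩, fun h0 => hz0 ?_⟩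
  rw [← hfa, h0, map_zero]

lemma ess_comap {f : M →ₗ[R] M'} {E : Submodule R M'} (hE : Ess E) : Ess (E.comap f) := by
  intro X hX
  by_cases hm : X.map f = ⊥
  · refine (ne_bot_iff' _).mpr ?_
    obtain ⟨x, hx, hx0⟩ := (ne_bot_iff' X).mp hX
    have hfx : f x = 0 := by
      have : f x ∈ X.map f := Submodule.mem_map_of_mem hx
      rw [hm] at this; simpa using this
    exact ⟨x, ⟨by simp [Submodule.mem_comap, hfx], hx⟩, hx0⟩
  · obtain ⟨z, ⟨hzE, ⟨a, ha, hfa⟩⟩, hz0⟩ := (ne_bot_iff' _).mp (hE _ hm)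
    refine (ne_bot_iff' _).mpr ⟨a, ⟨by simp [Submodule.mem_comap, hfa, hzE], ha⟩, ?_⟩
    rintro rfl; exact hz0 (by rw [← hfa, map_zero])

lemma indep_comp_mono {ι ι' : Type*} {V : ι → Submodule R M} (hV : Indep V)
    {g : ι' → ι} (hg : Function.Injective g) {W : ι' → Submodule R M}
    (hW : ∀ i, W i ≤ V (g i)) : Indep W := by
  intro i
  rw [eq_bot_iff]
  refine le_trans (inf_le_inf (hW i) ?_) (le_of_eq (hV (g i)))
  refine iSup_le fun j => iSup_le fun hj => ?_
  exact le_trans (hW j) (le_iSup_of_le (g j) (le_iSup_of_le (fun h => hj (hg h)) le_rfl))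


lemma map_mkQ_bot {P W : Submodule R M} (h : W ≤ P) : W.map P.mkQ = ⊥ := by
  rw [eq_bot_iff, Submodule.map_le_iff_le_comap, Submodule.comap_bot, Submodule.ker_mkQ]
  exact h

lemma iSup_map_mkQ {ι : Type*} (P : Submodule R M) (W : ι → Submodule R M) :
    (⨆ i, (W i).map P.mkQ) = (⨆ i, W i).map P.mkQ := (Submodule.map_iSup _ _).symm

lemma indep_map_quot {ι : Type*} {P : Submodule R M} {W : ι → Submodule R M}
    (hW : Indep W) (hP : P ⊓ (⨆ i, W i) = ⊥) :
    Indep (fun i => (W i).map P.mkQ) := by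
  intro i
  rw [eq_bot_iff]
  intro ξ hξ
  obtain ⟨h1, h2⟩ := hξ
  have hle1 : (⨆ j, ⨆ (_ : j ≠ i), (W j).map P.mkQ) ≤ (⨆ j, ⨆ (_ : j ≠ i), W j).map P.mkQ :=
    iSup_le fun j => iSup_le fun hj =>
      Submodule.map_mono (le_iSup_of_le j (le_iSup_of_le hj le_rfl))
  have h2' : ξ ∈ ((⨆ j, ⨆ (_ : j ≠ i), W j).map P.mkQ) := hle1 h2
  obtain ⟨x, hx, hqx⟩ := h1
  obtain ⟨y, hy, hqy⟩ := h2'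
  have hxy : x - y ∈ P := by
    rw [← Submodule.ker_mkQ P]
    exact LinearMap.mem_ker.mpr (by rw [map_sub, hqx, hqy, sub_self])
  have hxN : x ∈ ⨆ j, W j := le_iSup W i hx
  have hle2 : (⨆ j, ⨆ (_ : j ≠ i), W j) ≤ ⨆ j, W j :=
    iSup_le fun j => iSup_le fun _ => le_iSup W j
  have hyN : y ∈ ⨆ j, W j := hle2 hy
  have : x - y ∈ P ⊓ ⨆ j, W j := ⟨hxy, Submodule.sub_mem _ hxN hyN⟩
  rw [hP] at this
  have hxy' : x = y := by simpa [sub_eq_zero] using this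
  have : x ∈ W i ⊓ ⨆ j, ⨆ (_ : j ≠ i), W j := ⟨hx, hxy' ▸ hy⟩
  rw [hW i] at this
  simp only [Submodule.mem_bot] at this
  subst this
  simp [← hqx]

lemma dim_bound : ∀ (n : ℕ) {M : Type u} [AddCommGroup M] [Module R M]
    (U : Fin n → Submodule R M), (∀ i, Unif (U i)) → Indep U →
    ∀ (V : Fin (n+1) → Submodule R M), (∀ j, V j ≤ ⨆ i, U i) → (∀ j, V j ≠ ⊥) →
    Indep V → False := by
  intro n
  induction n with
  | zero =>
    intro M _ _ U _ _ V hVle hVb _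
    refine hVb 0 ?_
    rw [eq_bot_iff]
    refine le_trans (hVle 0) ?_
    simp
  | succ n IH =>
    intro M _ _ U hUu hUind V hVle hVb hVind
    set N : Submodule R M := ⨆ i : Fin n, U i.succ with hN
    have hNle0 : N ≤ ⨆ j, ⨆ (_ : j ≠ (0 : Fin (n+1))), U j :=
      iSup_le fun i => le_iSup_of_le i.succ (le_iSup_of_le (Fin.succ_ne_zero i) le_rfl)
    have hU0N : U 0 ⊓ N = ⊥ := by
      rw [eq_bot_iff, ← hUind 0]
      exact inf_le_inf_left _ hNle0
    have hUsuccInd : Indep (fun i : Fin n => U i.succ) :=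
      indep_comp_mono hUind (Fin.succ_injective n) (fun i => le_rfl)
    by_cases hex : ∃ j, V j ⊓ N = ⊥
    · obtain ⟨j₀, hj₀⟩ := hex
      set K : Submodule R M := V j₀ ⊔ N with hK
      -- K is "essential" among submodules of ⨆ U
      have hKess : ∀ X : Submodule R M, X ≤ (⨆ i, U i) → X ≠ ⊥ → X ⊓ K ≠ ⊥ := by
        intro X hXT hX
        by_cases hXN : X ⊓ N = ⊥
        · set r := N.mkQ
          have hkr : LinearMap.ker r = N := N.ker_mkQ
          have hU0q : Unif ((U 0).map r) := unif_map (by rw [hkr, inf_comm]; exact hU0N) (hUu 0)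
          have hmapT : ∀ W : Submodule R M, W ≤ (⨆ i, U i) → W.map r ≤ (U 0).map r := by
            intro W hW
            refine le_trans (Submodule.map_mono hW) ?_
            rw [Submodule.map_iSup]
            refine iSup_le fun i => ?_
            refine Fin.cases ?_ (fun i => ?_) i
            · exact le_rfl
            · rw [map_mkQ_bot (le_iSup (fun i : Fin n => U i.succ) i)]
              exact bot_le
          have hXr : X.map r ≠ ⊥ := map_ne_bot (by rw [hkr, inf_comm]; exact hXN) hX
          have hVr : (V j₀).map r ≠ ⊥ := map_ne_bot (by rw [hkr, inf_comm]; exact hj₀) (hVb j₀)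
          have hmeet := hU0q.2 _ _ (hmapT X hXT) (hmapT (V j₀) (hVle j₀)) hXr hVr
          obtain ⟨ξ, ⟨⟨x, hx, hfx⟩, ⟨v, hv, hfv⟩⟩, hξ⟩ := (ne_bot_iff' _).mp hmeet
          have hxv : x - v ∈ N := by
            rw [← hkr]
            exact LinearMap.mem_ker.mpr (by rw [map_sub, hfx, hfv, sub_self])
          refine (ne_bot_iff' _).mpr ⟨x, ⟨hx, ?_⟩, ?_⟩
          · have hxeq : x = v + (x - v) := by abel
            rw [hxeq]
            exact Submodule.add_mem _ (Submodule.mem_sup_left hv) (Submodule.mem_sup_right hxv)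
          · rintro rfl; exact hξ (by rw [← hfx, map_zero])
        · intro h
          refine hXN (eq_bot_iff.mpr (le_trans ?_ h.le))
          exact le_inf inf_le_left (inf_le_right.trans le_sup_right)
      -- quotient by V j₀
      set q := (V j₀).mkQ
      have hkq : LinearMap.ker q = V j₀ := (V j₀).ker_mkQ
      set g : Fin (n+1) → Fin (n+2) := j₀.succAbove with hg
      have hgi : Function.Injective g := Fin.succAbove_right_injective
      have hgne : ∀ j, g j ≠ j₀ := fun j => Fin.succAbove_ne j₀ j
      have hVj0U : ∀ i : Fin n, V j₀ ⊓ U i.succ = ⊥ := by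
        intro i
        rw [eq_bot_iff, ← hj₀]
        exact inf_le_inf_left _ (le_iSup (fun i : Fin n => U i.succ) i)
      set Ubar : Fin n → Submodule R (M ⧸ V j₀) := fun i => (U i.succ).map q with hUbar
      have hUbarU : ∀ i, Unif (Ubar i) := fun i =>
        unif_map (by rw [hkq]; exact hVj0U i) (hUu i.succ)
      have hUbarInd : Indep Ubar := indep_map_quot hUsuccInd (by rw [← hN]; exact hj₀)
      set V' : Fin (n+1) → Submodule R (M ⧸ V j₀) := fun j => (V (g j) ⊓ K).map q with hV'
      have hVgK : ∀ j, V (g j) ⊓ K ≠ ⊥ := fun j => hKess _ (hVle _) (hVb _)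
      have hVj0Vg : ∀ j, V j₀ ⊓ V (g j) = ⊥ := by
        intro j
        rw [eq_bot_iff, ← hVind j₀]
        exact inf_le_inf_left _ (le_iSup_of_le (g j) (le_iSup_of_le (hgne j) le_rfl))
      have hV'b : ∀ j, V' j ≠ ⊥ := by
        intro j
        refine map_ne_bot ?_ (hVgK j)
        rw [hkq, eq_bot_iff, ← hVj0Vg j]
        exact le_inf inf_le_left (inf_le_right.trans inf_le_left)
      have hV'le : ∀ j, V' j ≤ ⨆ i, Ubar i := by
        intro j
        refine le_trans (Submodule.map_mono inf_le_right) ?_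
        rw [hK, Submodule.map_sup, map_mkQ_bot le_rfl, iSup_map_mkQ, bot_sup_eq]
      have hV'ind : Indep V' := by
        refine indep_map_quot (W := fun j => V (g j) ⊓ K)
          (indep_comp_mono hVind hgi fun j => inf_le_left) ?_
        rw [eq_bot_iff, ← hVind j₀]
        refine inf_le_inf_left _ (iSup_le fun j => ?_)
        exact le_trans inf_le_left (le_iSup_of_le (g j) (le_iSup_of_le (hgne j) le_rfl))
      exact IH Ubar hUbarU hUbarInd V' hV'le hV'b hV'ind
    · push_neg at hex
      refine IH (fun i : Fin n => U i.succ) (fun i => hUu i.succ) hUsuccInd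
        (fun j : Fin (n+1) => V j.castSucc ⊓ N) (fun j => inf_le_right)
        (fun j => hex j.castSucc)
        (indep_comp_mono hVind (Fin.castSucc_injective _) fun j => inf_le_left)

lemma exists_unif_le : ∀ (n : ℕ) {M : Type u} [AddCommGroup M] [Module R M]
    (U : Fin n → Submodule R M), (∀ i, Unif (U i)) → Indep U →
    ∀ X : Submodule R M, X ≤ ⨆ i, U i → X ≠ ⊥ →
    ∃ Y : Submodule R M, Y ≤ X ∧ Y ≠ ⊥ ∧ Unif Y := by
  intro n
  induction n with
  | zero =>
    intro M _ _ U _ _ X hXle hX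
    exact absurd (eq_bot_iff.mpr (le_trans hXle (by simp))) hX
  | succ n IH =>
    intro M _ _ U hUu hUind X hXle hX
    set N : Submodule R M := ⨆ i : Fin n, U i.succ with hN
    have hNle0 : N ≤ ⨆ j, ⨆ (_ : j ≠ (0 : Fin (n+1))), U j :=
      iSup_le fun i => le_iSup_of_le i.succ (le_iSup_of_le (Fin.succ_ne_zero i) le_rfl)
    have hU0N : U 0 ⊓ N = ⊥ := by
      rw [eq_bot_iff, ← hUind 0]
      exact inf_le_inf_left _ hNle0
    by_cases h0 : X ⊓ U 0 = ⊥
    · set q := (U 0).mkQ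
      have hkq : LinearMap.ker q = U 0 := (U 0).ker_mkQ
      set Ubar : Fin n → Submodule R (M ⧸ U 0) := fun i => (U i.succ).map q with hUbar
      have hU0U : ∀ i : Fin n, U 0 ⊓ U i.succ = ⊥ := by
        intro i
        rw [eq_bot_iff, ← hU0N]
        exact inf_le_inf_left _ (le_iSup (fun i : Fin n => U i.succ) i)
      have hUbarU : ∀ i, Unif (Ubar i) := fun i =>
        unif_map (by rw [hkq]; exact hU0U i) (hUu i.succ)
      have hUbarInd : Indep Ubar :=
        indep_map_quot (indep_comp_mono hUind (Fin.succ_injective n) fun i => le_rfl)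
          (by rw [← hN]; exact hU0N)
      have hkX : LinearMap.ker q ⊓ X = ⊥ := by rw [hkq, inf_comm]; exact h0
      have hXbar : X.map q ≠ ⊥ := map_ne_bot hkX hX
      have hXbarle : X.map q ≤ ⨆ i, Ubar i := by
        refine le_trans (Submodule.map_mono hXle) ?_
        rw [show (⨆ i, U i) = U 0 ⊔ N by
          rw [hN]
          exact le_antisymm (iSup_le fun i => Fin.cases le_sup_left
            (fun i => le_trans (le_iSup (fun i : Fin n => U i.succ) i) le_sup_right) i)
            (sup_le (le_iSup U 0) (iSup_le fun i => le_iSup U i.succ))]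
        rw [Submodule.map_sup, map_mkQ_bot le_rfl, iSup_map_mkQ, bot_sup_eq]
      obtain ⟨Ybar, hYle, hYb, hYu⟩ := IH Ubar hUbarU hUbarInd (X.map q) hXbarle hXbar
      set Y : Submodule R M := X ⊓ Submodule.comap q Ybar with hY
      have hkY : LinearMap.ker q ⊓ Y = ⊥ := by
        rw [eq_bot_iff, ← hkX]
        exact inf_le_inf_left _ inf_le_left
      have hYb' : Y ≠ ⊥ := by
        obtain ⟨y, hy, hy0⟩ := (ne_bot_iff' _).mp hYb
        obtain ⟨x, hxX, hqx⟩ := hYle hy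
        refine (ne_bot_iff' _).mpr ⟨x, ⟨hxX, ?_⟩, ?_⟩
        · exact Submodule.mem_comap.mpr (by rw [hqx]; exact hy)
        · rintro rfl; exact hy0 (by rw [← hqx, map_zero])
      refine ⟨Y, inf_le_left, hYb', unif_of_map hkY hYb' ?_⟩
      refine unif_mono hYu ?_ (map_ne_bot hkY hYb')
      exact le_trans (Submodule.map_mono inf_le_right) (Submodule.map_comap_le _ _)
    · refine ⟨X ⊓ U 0, inf_le_left, h0, unif_mono (hUu 0) inf_le_right h0⟩


lemma dim_bound_ess {n : ℕ} (U : Fin n → Submodule R M) (hUu : ∀ i, Unif (U i))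
    (hUind : Indep U) (hUess : Ess (⨆ i, U i)) (V : Fin (n+1) → Submodule R M)
    (hVb : ∀ j, V j ≠ ⊥) (hVind : Indep V) : False := by
  refine dim_bound n U hUu hUind (fun j => V j ⊓ (⨆ i, U i)) (fun j => inf_le_right)
    (fun j => ?_) (indep_comp_mono hVind (Function.injective_id) fun j => inf_le_left)
  show V j ⊓ (⨆ i, U i) ≠ ⊥
  rw [inf_comm]
  exact hUess (V j) (hVb j)

lemma exists_unif_le_ess {n : ℕ} (U : Fin n → Submodule R M) (hUu : ∀ i, Unif (U i))
    (hUind : Indep U) (hUess : Ess (⨆ i, U i)) (X : Submodule R M) (hX : X ≠ ⊥) :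
    ∃ Y : Submodule R M, Y ≤ X ∧ Y ≠ ⊥ ∧ Unif Y := by
  obtain ⟨Y, h1, h2, h3⟩ := exists_unif_le n U hUu hUind (X ⊓ ⨆ i, U i)
    inf_le_right (by rw [inf_comm]; exact hUess X hX)
  exact ⟨Y, h1.trans inf_le_left, h2, h3⟩


/-- Zorn: every submodule has a pseudocomplement with essential join. -/
lemma exists_compl_ess (I : Submodule R M) : ∃ C : Submodule R M, I ⊓ C = ⊥ ∧ Ess (I ⊔ C) := by
  obtain ⟨C, -, hC⟩ := zorn_le_nonempty₀ {C : Submodule R M | I ⊓ C = ⊥}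
    (fun c hcs hchain y hy => by
      refine ⟨sSup c, ?_, fun z hz => le_sSup hz⟩
      rw [Set.mem_setOf_eq, eq_bot_iff]
      intro x hx
      obtain ⟨N, hN, hxN⟩ := (Submodule.mem_sSup_of_directed ⟨y, hy⟩
        (hchain.directedOn)).mp hx.2
      have : x ∈ I ⊓ N := ⟨hx.1, hxN⟩
      rw [hcs hN] at this
      exact this) ⊥ (by simp)
  refine ⟨C, hC.prop, fun X hX => ?_⟩
  intro hIX
  have hCX : I ⊓ (C ⊔ X) = ⊥ := by
    rw [eq_bot_iff]
    intro z hz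
    obtain ⟨c, hc, x, hx, hcx⟩ := Submodule.mem_sup.mp hz.2
    have hxIX : z - c ∈ (I ⊔ C) ⊓ X := by
      constructor
      · exact Submodule.sub_mem _ (Submodule.mem_sup_left hz.1) (Submodule.mem_sup_right hc)
      · have : z - c = x := by rw [← hcx]; abel
        rw [this]; exact hx
    rw [hIX] at hxIX
    have hzc : z = c := by
      have := Submodule.mem_bot (R := R) |>.mp hxIX
      have h2 : z - c = 0 := this
      linear_combination (norm := abel) h2
    have : z ∈ I ⊓ C := ⟨hz.1, hzc ▸ hc⟩
    rw [hC.prop] at this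
    exact this
  have hXC : X ≤ C := by
    have := hC.2 hCX le_sup_left
    exact le_trans le_sup_right this
  refine hX ?_
  rw [eq_bot_iff, ← hIX]
  exact le_inf (le_trans hXC le_sup_right) le_rfl


end Mod

section RingLevel

lemma one_mem_reg : (1 : R) ∈ reg R :=
  ⟨fun x h => by simpa using h, fun x h => by simpa using h⟩

lemma mul_mem_reg {a b : R} (ha : a ∈ reg R) (hb : b ∈ reg R) : a * b ∈ reg R := by
  constructor
  · intro x h
    rw [← mul_assoc] at h
    exact ha.1 x (hb.1 (x * a) h)
  · intro x h
    rw [mul_assoc] at h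
    exact hb.2 x (ha.2 (b * x) h)

lemma reg_left_cancel {s x : R} (hs : s ∈ reg R) (h : s * x = 0) : x = 0 := hs.2 x h
lemma reg_right_cancel {s x : R} (hs : s ∈ reg R) (h : x * s = 0) : x = 0 := hs.1 x h

/-- right multiplication by `u` as a linear map on the left module `R`. -/
abbrev rmul (u : R) : R →ₗ[R] R := LinearMap.toSpanSingleton R R u

lemma rmul_apply (u x : R) : rmul u x = x * u := by
  rw [LinearMap.toSpanSingleton_apply, smul_eq_mul]

lemma rmul_ker_bot {c : R} (hc : c ∈ lReg R) : LinearMap.ker (rmul (R := R) c) = ⊥ := by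
  rw [eq_bot_iff]
  intro x hx
  have : x * c = 0 := by rw [← rmul_apply]; exact hx
  simpa using hc x this

/-- `Rc` is an essential left ideal for regular `c` (given a finite uniform decomposition). -/
lemma span_reg_ess {n : ℕ} {U : Fin (n+1) → Submodule R R}
    (hUu : ∀ i, Unif (U i)) (hUind : Indep U) (hUess : Ess (⨆ i, U i))
    {c : R} (hc : c ∈ lReg R) : Ess (Submodule.span R {c}) := by
  intro X hX
  intro hbot
  have hker : LinearMap.ker (rmul (R := R) c) = ⊥ := rmul_ker_bot hc
  have hrange : ∀ y : R, rmul (R := R) c y ∈ Submodule.span R {c} := fun y =>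
    Submodule.mem_span_singleton.mpr ⟨y, rfl⟩
  set W : Fin (n+2) → Submodule R R :=
    Fin.snoc (fun i => (U i).map (rmul (R := R) c)) X with hW
  have hWb : ∀ j, W j ≠ ⊥ := by
    refine Fin.lastCases ?_ (fun i => ?_)
    · rw [hW, Fin.snoc_last]; exact hX
    · rw [hW, Fin.snoc_castSucc]
      exact map_ne_bot (by rw [hker]; simp) (hUu i).1
  have hWind : Indep W := by
    intro j
    rw [eq_bot_iff]
    intro z hz
    obtain ⟨hz1, hz2⟩ := hz
    rcases Fin.eq_castSucc_or_eq_last j with ⟨i, rfl⟩ | rfl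
    · -- z ∈ map rmul (U i), and z ∈ sup of others ⊔ X
      have hle : (⨆ k, ⨆ (_ : k ≠ i.castSucc), W k) ≤
          ((⨆ k, ⨆ (_ : k ≠ i), U k).map (rmul (R := R) c)) ⊔ X := by
        refine iSup_le fun k => iSup_le fun hk => ?_
        rcases Fin.eq_castSucc_or_eq_last k with ⟨k', rfl⟩ | rfl
        · have hki : k' ≠ i := fun h => hk (by rw [h])
          rw [hW, Fin.snoc_castSucc]
          exact le_sup_of_le_left (Submodule.map_mono
            (le_iSup_of_le k' (le_iSup_of_le hki le_rfl)))
        · rw [hW, Fin.snoc_last]; exact le_sup_right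
      have hz2' := hle hz2
      rw [hW, Fin.snoc_castSucc] at hz1
      obtain ⟨u, hu, hu'⟩ := hz1
      obtain ⟨w, ⟨v, hv, hv'⟩, ξ, hξ, hwξ⟩ := Submodule.mem_sup.mp hz2'
      have hξspan : ξ ∈ Submodule.span R {c} ⊓ X := by
        refine ⟨?_, hξ⟩
        have : ξ = rmul (R := R) c (u - v) := by
          rw [map_sub, hu', hv']
          rw [← hwξ]; abel
        rw [this]; exact hrange _
      rw [hbot] at hξspan
      have hξ0 : ξ = 0 := hξspan
      have huv : u = v := by
        have h1 : rmul (R := R) c (u - v) = 0 := by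
          rw [map_sub, hu', hv', ← hwξ, hξ0]; abel
        have h2 : u - v ∈ LinearMap.ker (rmul (R := R) c) := h1
        rw [hker] at h2
        have : u - v = 0 := h2
        linear_combination (norm := abel) this
      have : u ∈ U i ⊓ (⨆ k, ⨆ (_ : k ≠ i), U k) := ⟨hu, huv ▸ hv⟩
      rw [hUind i] at this
      have : u = 0 := this
      rw [Submodule.mem_bot, ← hu', this, map_zero]
    · -- z ∈ X and z ∈ sup of the maps ≤ span {c}
      have hle : (⨆ k, ⨆ (_ : k ≠ Fin.last (n+1)), W k) ≤ Submodule.span R {c} := by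
        refine iSup_le fun k => iSup_le fun hk => ?_
        rcases Fin.eq_castSucc_or_eq_last k with ⟨k', rfl⟩ | rfl
        · rw [hW, Fin.snoc_castSucc]
          rintro w ⟨v, hv, rfl⟩
          exact hrange v
        · exact absurd rfl hk
      rw [hW, Fin.snoc_last] at hz1
      have hzz : z ∈ Submodule.span R {c} ⊓ X := ⟨hle hz2, hz1⟩
      rw [hbot] at hzz
      exact hzz
  exact dim_bound_ess U hUu hUind hUess W hWb hWind


lemma chain_sum_zero {m : ℕ} {V : Fin m → Submodule R R} {u : Fin m → R}
    (hu : ∀ i, u i ∈ lRegIn (V i))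
    (htri : ∀ i j : Fin m, i < j → ∀ x ∈ V j, x * u i = 0) :
    ∀ s : Finset (Fin m), ∀ z : Fin m → R, (∀ j ∈ s, z j ∈ V j) →
      (∑ j ∈ s, z j) = 0 → ∀ j ∈ s, z j = 0 := by
  intro s
  induction s using Finset.induction_on_min with
  | empty => intro z _ _ j hj; exact absurd hj (Finset.notMem_empty j)
  | insert a t hat IH =>
    intro z hz hsum j hj
    have hanotin : a ∉ t := fun h => lt_irrefl a (hat a h)
    rw [Finset.sum_insert hanotin] at hsum
    -- multiply by u a on the right
    have hza : z a * u a = 0 := by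
      have h0 : (z a + ∑ j ∈ t, z j) * u a = 0 := by rw [hsum, zero_mul]
      rw [add_mul, Finset.sum_mul] at h0
      have ht0 : ∀ j ∈ t, z j * u a = 0 := fun j hjt =>
        htri a j (hat j hjt) (z j) (hz j (Finset.mem_insert_of_mem hjt))
      rw [Finset.sum_congr rfl ht0] at h0
      simpa using h0
    have hza' : z a = 0 := (hu a).2 (z a) (hz a (Finset.mem_insert_self a t)) hza
    rcases Finset.mem_insert.mp hj with rfl | hjt
    · exact hza'
    · refine IH z (fun k hk => hz k (Finset.mem_insert_of_mem hk)) ?_ j hjt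
      rw [hza', zero_add] at hsum
      exact hsum

lemma chain_indep {m : ℕ} {V : Fin m → Submodule R R} {u : Fin m → R}
    (hu : ∀ i, u i ∈ lRegIn (V i))
    (htri : ∀ i j : Fin m, i < j → ∀ x ∈ V j, x * u i = 0) : Indep V := by
  intro i
  rw [eq_bot_iff]
  intro x hx
  obtain ⟨hxi, hxs⟩ := hx
  rw [iSup_subtype'] at hxs
  obtain ⟨f, hf, hfsum⟩ := (Submodule.mem_iSup_iff_exists_finsupp _ _).mp hxs
  classical
  set e : {j : Fin m // j ≠ i} ↪ Fin m := ⟨Subtype.val, Subtype.val_injective⟩ with he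
  set s : Finset (Fin m) := insert i (f.support.map e) with hs
  set z : Fin m → R := fun j => if h : j = i then -x else f ⟨j, h⟩ with hz
  have hinotin : i ∉ f.support.map e := by
    simp only [Finset.mem_map, he, Function.Embedding.coeFn_mk]
    rintro ⟨⟨j, hj⟩, -, h⟩
    exact hj h
  have hzmem : ∀ j ∈ s, z j ∈ V j := by
    intro j hj
    rcases Finset.mem_insert.mp hj with rfl | hjm
    · simp only [hz, dif_pos rfl]
      exact Submodule.neg_mem _ hxi
    · obtain ⟨⟨j', hj'⟩, _, rfl⟩ := Finset.mem_map.mp hjm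
      simp only [hz, he, Function.Embedding.coeFn_mk, dif_neg hj']
      exact hf ⟨j', hj'⟩
  have hsum : (∑ j ∈ s, z j) = 0 := by
    rw [hs, Finset.sum_insert hinotin, Finset.sum_map]
    have : ∀ a ∈ f.support, z (e a) = f a := by
      intro a _
      simp only [hz, he, Function.Embedding.coeFn_mk, dif_neg a.2]
    rw [Finset.sum_congr rfl this]
    have : (∑ a ∈ f.support, f a) = x := by
      rw [← hfsum]; rfl
    rw [this]
    simp [hz]
  have := chain_sum_zero hu htri s z hzmem hsum i (Finset.mem_insert_self i _)
  simp only [hz, dif_pos rfl, neg_eq_zero] at this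
  simpa using this

/-- An essential left ideal contains a left regular element
(under the Bavula hypotheses). -/
theorem ess_contains_lreg
    {n : ℕ} {U : Fin (n+1) → Submodule R R}
    (hUu : ∀ i, Unif (U i)) (hUind : Indep U) (hUess : Ess (⨆ i, U i))
    (h'C : ∀ V : Submodule R R, UniformIdeal V → (lRegIn V).Nonempty)
    {E : Submodule R R} (hE : Ess E) :
    ∃ c, c ∈ E ∧ c ∈ lReg R := by
  classical
  have key : ∀ m : ℕ, (∃ c, c ∈ E ∧ c ∈ lReg R) ∨
      (∃ V : Fin m → Submodule R R, ∃ u : Fin m → R,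
        (∀ i, V i ≤ E) ∧ (∀ i, Unif (V i)) ∧ (∀ i, u i ∈ lRegIn (V i)) ∧
        (∀ i j : Fin m, i < j → ∀ x ∈ V j, x * u i = 0)) := by
    intro m
    induction m with
    | zero =>
      right
      exact ⟨fun i => i.elim0, fun i => i.elim0, fun i => i.elim0,
        fun i => i.elim0, fun i => i.elim0, fun i j _ => i.elim0⟩
    | succ m IH =>
      rcases IH with h | ⟨V, u, hVE, hVu, hu, htri⟩
      · exact Or.inl h
      set A : Submodule R R := ⨅ i : Fin m, LinearMap.ker (LinearMap.toSpanSingleton R R (u i))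
        with hA
      have hmemA : ∀ x : R, x ∈ A ↔ ∀ i, x * u i = 0 := by
        intro x
        simp only [hA, Submodule.mem_iInf, LinearMap.mem_ker,
          LinearMap.toSpanSingleton_apply, smul_eq_mul]
      by_cases hAbot : A = ⊥
      · left
        refine ⟨∑ i, u i, Submodule.sum_mem _ (fun i _ => hVE i ((hu i).1)), ?_⟩
        intro x hx
        have hk : ∀ N : ℕ, ∀ k : Fin m, (k : ℕ) < N → x * u k = 0 := by
          intro N
          induction N with
          | zero => intro k hk; exact absurd hk (Nat.not_lt_zero _)
          | succ N IHN =>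
            intro k hkN
            have h0 : x * (∑ i, u i) * u k = 0 := by rw [hx, zero_mul]
            rw [Finset.mul_sum, Finset.sum_mul] at h0
            rw [Finset.sum_eq_single k (fun i _ hik => ?_) (fun h => absurd (Finset.mem_univ k) h)]
              at h0
            · have hxk : x * u k ∈ V k := by
                have := (V k).smul_mem x (hu k).1
                rwa [smul_eq_mul] at this
              exact (hu k).2 (x * u k) hxk h0
            · rcases lt_or_gt_of_ne hik with hlt | hgt
              · have hiN : (i : ℕ) < N := by
                  have h1 : (i : ℕ) < (k : ℕ) := hlt
                  omega
                rw [IHN i hiN, zero_mul]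
              · rw [mul_assoc, htri k i hgt (u i) ((hu i).1), mul_zero]
        have hxA : x ∈ A := (hmemA x).mpr (fun i => hk m i i.isLt)
        rw [hAbot] at hxA
        simpa using hxA
      · right
        have hEA : E ⊓ A ≠ ⊥ := hE A hAbot
        obtain ⟨Y, hYle, hYb, hYu⟩ := exists_unif_le_ess U hUu hUind hUess (E ⊓ A) hEA
        obtain ⟨u', hu'⟩ := h'C Y hYu
        have hYA : Y ≤ A := hYle.trans inf_le_right
        refine ⟨Fin.snoc V Y, Fin.snoc u u', ?_, ?_, ?_, ?_⟩
        · refine Fin.lastCases ?_ (fun i => ?_)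
          · rw [Fin.snoc_last]; exact hYle.trans inf_le_left
          · rw [Fin.snoc_castSucc]; exact hVE i
        · refine Fin.lastCases ?_ (fun i => ?_)
          · rw [Fin.snoc_last]; exact hYu
          · rw [Fin.snoc_castSucc]; exact hVu i
        · refine Fin.lastCases ?_ (fun i => ?_)
          · rw [Fin.snoc_last, Fin.snoc_last]; exact hu'
          · rw [Fin.snoc_castSucc, Fin.snoc_castSucc]; exact hu i
        · intro i j hij x hxj
          rcases Fin.eq_castSucc_or_eq_last j with ⟨j', rfl⟩ | rfl
          · rcases Fin.eq_castSucc_or_eq_last i with ⟨i', rfl⟩ | rfl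
            · rw [Fin.snoc_castSucc] at hxj ⊢
              exact htri i' j' (Fin.castSucc_lt_castSucc_iff.mp hij) x hxj
            · exact absurd hij (asymm (Fin.castSucc_lt_last j'))
          · rcases Fin.eq_castSucc_or_eq_last i with ⟨i', rfl⟩ | rfl
            · rw [Fin.snoc_last] at hxj
              rw [Fin.snoc_castSucc]
              exact (hmemA x).mp (hYA hxj) i'
            · exact absurd hij (lt_irrefl _)
  rcases key (n + 2) with h | ⟨V, u, hVE, hVu, hu, htri⟩
  · exact h
  · exact absurd (chain_indep hu htri)
      (fun hind => dim_bound_ess U hUu hUind hUess V (fun j => (hVu j).1) hind)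


/-- The left Ore condition for `C_R`. -/
lemma left_ore {n : ℕ} {U : Fin (n+1) → Submodule R R}
    (hUu : ∀ i, Unif (U i)) (hUind : Indep U) (hUess : Ess (⨆ i, U i))
    (h'C : ∀ V : Submodule R R, UniformIdeal V → (lRegIn V).Nonempty)
    (hlr : lReg R = reg R) :
    ∀ s ∈ reg R, ∀ r : R, ∃ s' ∈ reg R, ∃ r' : R, s' * r = r' * s := by
  intro s hs r
  have hEss : Ess ((Submodule.span R {s}).comap (rmul (R := R) r)) :=
    ess_comap (span_reg_ess hUu hUind hUess hs.1)
  obtain ⟨c, hcE, hclreg⟩ := ess_contains_lreg hUu hUind hUess h'C hEss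
  have hcreg : c ∈ reg R := by rw [← hlr]; exact hclreg
  have hmem : c * r ∈ Submodule.span R {s} := by
    have := Submodule.mem_comap.mp hcE
    rwa [rmul_apply] at this
  obtain ⟨a, ha⟩ := Submodule.mem_span_singleton.mp hmem
  exact ⟨c, hcreg, a, by rw [← ha, smul_eq_mul]⟩


variable {Q : Type u} [Ring Q]

/-- common denominators for elements of `span_Q (f '' X)` -/
lemma loc_common_denom (f : R →+* Q)
    (hOre : ∀ s ∈ reg R, ∀ r : R, ∃ s' ∈ reg R, ∃ r' : R, s' * r = r' * s)
    (hfrac : ∀ q : Q, ∃ s ∈ reg R, ∃ r : R, f s * q = f r)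
    (X : Submodule R R) {q : Q} (hq : q ∈ Submodule.span Q (f '' (X : Set R))) :
    ∃ s ∈ reg R, ∃ x ∈ X, f s * q = f x := by
  induction hq using Submodule.span_induction with
  | mem y hy =>
    obtain ⟨x, hx, rfl⟩ := hy
    exact ⟨1, one_mem_reg, x, hx, by simp⟩
  | zero => exact ⟨1, one_mem_reg, 0, Submodule.zero_mem _, by simp⟩
  | add q1 q2 _ _ h1 h2 =>
    obtain ⟨s1, hs1, x1, hx1, hf1⟩ := h1
    obtain ⟨s2, hs2, x2, hx2, hf2⟩ := h2
    obtain ⟨t, ht, a, hta⟩ := hOre s1 hs1 s2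
    refine ⟨t * s2, mul_mem_reg ht hs2, a * x1 + t * x2, ?_, ?_⟩
    · exact Submodule.add_mem _ (by simpa [smul_eq_mul] using X.smul_mem a hx1)
        (by simpa [smul_eq_mul] using X.smul_mem t hx2)
    · rw [mul_add, map_add]
      congr 1
      · rw [hta, map_mul, mul_assoc, hf1, ← map_mul]
      · rw [map_mul, mul_assoc, hf2, ← map_mul]
  | smul a q' hq' h =>
    obtain ⟨s, hs, x, hx, hfs⟩ := h
    obtain ⟨t, ht, r, hfr⟩ := hfrac a
    obtain ⟨w, hw, b, hwb⟩ := hOre s hs r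
    refine ⟨w * t, mul_mem_reg hw ht, b * x, by simpa [smul_eq_mul] using X.smul_mem b hx, ?_⟩
    have hstep : f (w * t) * (a • q') = f w * (f t * a * q') := by
      rw [map_mul, smul_eq_mul, mul_assoc, ← mul_assoc (f t) a q']
    rw [hstep, hfr, ← mul_assoc, ← map_mul, hwb, map_mul, mul_assoc, hfs, ← map_mul]

/-- preimage of a left ideal of `Q` -/
def preIdeal (f : R →+* Q) (N : Submodule Q Q) : Submodule R R where
  carrier := f ⁻¹' N
  add_mem' := fun {a b} ha hb => by
    simp only [Set.mem_preimage, map_add] at *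
    exact N.add_mem ha hb
  zero_mem' := by simp only [Set.mem_preimage, map_zero]; exact N.zero_mem
  smul_mem' := fun r x hx => by
    simp only [Set.mem_preimage, smul_eq_mul, map_mul] at *
    exact N.smul_mem (f r) hx

lemma mem_preIdeal {f : R →+* Q} {N : Submodule Q Q} {x : R} :
    x ∈ preIdeal f N ↔ f x ∈ N := Iff.rfl

lemma ess_preIdeal (f : R →+* Q)
    (hOre : ∀ s ∈ reg R, ∀ r : R, ∃ s' ∈ reg R, ∃ r' : R, s' * r = r' * s)
    (hfrac : ∀ q : Q, ∃ s ∈ reg R, ∃ r : R, f s * q = f r)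
    (hunits : ∀ s ∈ reg R, IsUnit (f s))
    (hinj : ∀ r : R, f r = 0 → r = 0)
    {N : Submodule Q Q} (hN : Ess N) : Ess (preIdeal f N) := by
  intro X hX
  have hQX : Submodule.span Q (f '' (X : Set R)) ≠ ⊥ := by
    obtain ⟨x, hx, hx0⟩ := (ne_bot_iff' X).mp hX
    refine (ne_bot_iff' _).mpr ⟨f x, Submodule.subset_span ⟨x, hx, rfl⟩, fun h => hx0 (hinj x h)⟩
  obtain ⟨q, ⟨hqN, hqX⟩, hq0⟩ := (ne_bot_iff' _).mp (hN _ hQX)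
  obtain ⟨s, hs, x, hxX, hfs⟩ := loc_common_denom f hOre hfrac X hqX
  have hfxN : f x ∈ N := by
    rw [← hfs]
    exact N.smul_mem (f s) hqN
  have hfx0 : f x ≠ 0 := by
    intro h
    rw [← hfs] at h
    obtain ⟨u, hu⟩ := hunits s hs
    have h2 : (↑u⁻¹ : Q) * (f s * q) = 0 := by rw [h, mul_zero]
    rw [← mul_assoc, ← hu, Units.inv_mul, one_mul] at h2
    exact hq0 h2
  refine (ne_bot_iff' _).mpr ⟨x, ⟨hfxN, hxX⟩, fun h => hfx0 (by rw [h, map_zero])⟩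

lemma unit_mem_top {N : Submodule Q Q} {u : Q} (hu : u ∈ N) (hunit : IsUnit u) : N = ⊤ := by
  obtain ⟨v, hv⟩ := hunit
  rw [eq_top_iff]
  intro y _
  have : y = (y * ↑v⁻¹) * u := by rw [mul_assoc, ← hv, Units.inv_mul, mul_one]
  rw [this]
  exact N.smul_mem _ hu

/-- Direction (2) ⇒ (1). -/
theorem dir2to1 (_hsp : SemiprimeRing R) (hfin : FinUdim R) (hlr : lReg R = reg R)
    (h'C : ∀ V : Submodule R R, UniformIdeal V → (lRegIn V).Nonempty) :
    IsLeftOre (reg R) ∧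
      ∃ (Q : Type u) (_ : Ring Q) (f : R →+* Q),
        IsLeftLoc (reg R) f ∧ IsSemisimpleRing Q := by
  classical
  obtain ⟨n, U, hUu, hUind, hUess⟩ := hfin
  have hUu' : ∀ i, Unif (U i) := hUu
  have hUind' : Indep U := hUind
  have hUess' : Ess (⨆ i, U i) := hUess
  -- nontrivial
  have h01 : (0 : R) ≠ 1 := by
    obtain ⟨x, _, hx0⟩ := (ne_bot_iff' _).mp (hUu 0).1
    intro h
    exact hx0 (by rw [← mul_one x, ← h, mul_zero])
  have h0reg : (0 : R) ∉ reg R := fun h => h01 ((h.2 1 (zero_mul 1)).symm ▸ rfl)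
  have hOre := left_ore hUu' hUind' hUess' h'C hlr
  refine ⟨⟨⟨one_mem_reg, fun a ha b hb => mul_mem_reg ha hb, h0reg⟩, hOre⟩, ?_⟩
  -- construct the Ore localization
  set S : Submonoid R :=
    { carrier := reg R
      mul_mem' := fun ha hb => mul_mem_reg ha hb
      one_mem' := one_mem_reg } with hS
  have hchoice : ∀ (r : R) (s : S), ∃ p : R × R, p.1 ∈ reg R ∧ p.1 * r = p.2 * s :=
    fun r s => by
      obtain ⟨s', hs', r', h⟩ := hOre s s.2 r
      exact ⟨(s', r'), hs', h⟩
  letI : OreLocalization.OreSet S :=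
    { ore_right_cancel := fun r1 r2 s h => ⟨1, by
        have h1 : (r1 - r2) * s = 0 := by rw [sub_mul, h, sub_self]
        have h2 : r1 - r2 = 0 := reg_right_cancel s.2 h1
        have h3 : r1 = r2 := sub_eq_zero.mp h2
        rw [h3]⟩
      oreNum := fun r s => (Classical.choose (hchoice r s)).2
      oreDenom := fun r s => ⟨(Classical.choose (hchoice r s)).1,
        (Classical.choose_spec (hchoice r s)).1⟩
      ore_eq := fun r s => (Classical.choose_spec (hchoice r s)).2 }
  refine ⟨OreLocalization S R, inferInstance, OreLocalization.numeratorRingHom, ?_, ?_⟩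
  · -- IsLeftLoc
    have hfs : ∀ s : R, (OreLocalization.numeratorRingHom : R →+* OreLocalization S R) s
        = s /ₒ (1 : S) := fun s => OreLocalization.numeratorHom_apply
    have hmul : ∀ (r : R) (s : S),
        ((s : R) /ₒ (1 : S)) * (r /ₒ s) = r /ₒ (1 : S) := by
      intro r s
      rw [OreLocalization.oreDiv_mul_char (s : R) r 1 s 1 1 (by simp)]
      simp
    refine ⟨?_, ?_, ?_⟩
    · intro s hs
      exact OreLocalization.numerator_isUnit (⟨s, hs⟩ : S)
    · intro q
      induction q using OreLocalization.ind with
      | _ r s =>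
        exact ⟨s, s.2, r, by rw [hfs, hfs, hmul]⟩
    · intro r
      rw [hfs, OreLocalization.zero_def, OreLocalization.oreDiv_eq_iff]
      constructor
      · rintro ⟨u, v, h1, h2⟩
        refine ⟨u, u.2, ?_⟩
        have hv : (u : R) = v := by simpa using h2
        have h0 : (0 : R) = v * r := by
          simpa [Submonoid.smul_def, smul_eq_mul] using h1
        rw [hv]
        exact h0.symm
      · rintro ⟨s, hs, hsr⟩
        exact ⟨⟨s, hs⟩, s, by simpa [Submonoid.smul_def, smul_eq_mul] using hsr.symm, rfl⟩
  · -- semisimple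
    set f : R →+* OreLocalization S R := OreLocalization.numeratorRingHom with hf
    have hunits : ∀ s ∈ reg R, IsUnit (f s) := fun s hs =>
      OreLocalization.numerator_isUnit (⟨s, hs⟩ : S)
    have hmul : ∀ (r : R) (s : S), ((s : R) /ₒ (1 : S)) * (r /ₒ s) = r /ₒ (1 : S) := by
      intro r s
      rw [OreLocalization.oreDiv_mul_char (s : R) r 1 s 1 1 (by simp)]
      simp
    have hfrac : ∀ q : OreLocalization S R, ∃ s ∈ reg R, ∃ r : R, f s * q = f r := by
      intro q
      induction q using OreLocalization.ind with
      | _ r s =>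
        refine ⟨s, s.2, r, ?_⟩
        have h1 : f (s : R) = (s : R) /ₒ (1 : S) := OreLocalization.numeratorHom_apply
        have h2 : f r = r /ₒ (1 : S) := OreLocalization.numeratorHom_apply
        rw [h1, h2, hmul]
    have hinj : ∀ r : R, f r = 0 → r = 0 := by
      intro r h
      rw [show f r = r /ₒ (1 : S) from OreLocalization.numeratorHom_apply,
        OreLocalization.zero_def, OreLocalization.oreDiv_eq_iff] at h
      obtain ⟨u, v, h1, h2⟩ := h
      have hv : (u : R) = v := by simpa using h2
      have h0 : (0 : R) = v * r := by
        simpa [Submonoid.smul_def, smul_eq_mul] using h1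
      rw [← hv] at h0
      exact reg_left_cancel u.2 h0.symm
    refine IsSemisimpleModule.mk (toComplementedLattice := ⟨fun I => ?_⟩)
    obtain ⟨C, hIC, hess⟩ := exists_compl_ess I
    have htop : I ⊔ C = ⊤ := by
      have hpre : Ess (preIdeal f (I ⊔ C)) := ess_preIdeal f hOre hfrac hunits hinj hess
      obtain ⟨c, hcE, hclreg⟩ := ess_contains_lreg hUu' hUind' hUess' h'C hpre
      exact unit_mem_top (mem_preIdeal.mp hcE) (hunits c (by rw [← hlr]; exact hclreg))
    exact ⟨C, disjoint_iff.mpr hIC, codisjoint_iff.mpr htop⟩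


lemma preIdeal_mono {f : R →+* Q} {N N' : Submodule Q Q} (h : N ≤ N') :
    preIdeal f N ≤ preIdeal f N' := fun _ hx => h hx

section Dir1


variable (f : R →+* Q)
variable (hOre : ∀ s ∈ reg R, ∀ r : R, ∃ s' ∈ reg R, ∃ r' : R, s' * r = r' * s)
variable (hfrac : ∀ q : Q, ∃ s ∈ reg R, ∃ r : R, f s * q = f r)
variable (hunits : ∀ s ∈ reg R, IsUnit (f s))
variable (hinj : ∀ r : R, f r = 0 → r = 0)

include hunits in
lemma unit_mul_ne_zero {s : R} (hs : s ∈ reg R) {q : Q} (hq : q ≠ 0) : f s * q ≠ 0 := by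
  intro h
  obtain ⟨u, hu⟩ := hunits s hs
  have h2 : (↑u⁻¹ : Q) * (f s * q) = 0 := by rw [h, mul_zero]
  rw [← mul_assoc, ← hu, Units.inv_mul, one_mul] at h2
  exact hq h2

include hOre hfrac hunits hinj in
/-- every essential left ideal contains a regular element, given a semisimple localization. -/
lemma loc_ess_reg [IsSemisimpleRing Q] {E : Submodule R R} (hE : Ess E) :
    ∃ c, c ∈ E ∧ c ∈ reg R := by
  set QE : Submodule Q Q := Submodule.span Q (f '' (E : Set R)) with hQE
  obtain ⟨L, hL⟩ := ComplementedLattice.exists_isCompl QE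
  have hLbot : L = ⊥ := by
    by_contra hLb
    obtain ⟨q, hqL, hq0⟩ := (ne_bot_iff' L).mp hLb
    obtain ⟨s, hs, r, hfr⟩ := hfrac q
    have hfrL : f r ∈ L := by rw [← hfr]; exact L.smul_mem (f s) hqL
    have hr0 : r ≠ 0 := by
      intro h
      exact unit_mul_ne_zero f hunits hs hq0 (by rw [hfr, h, map_zero])
    have hspan : Submodule.span R {r} ≠ ⊥ :=
      (ne_bot_iff' _).mpr ⟨r, Submodule.mem_span_singleton_self r, hr0⟩
    obtain ⟨a, ⟨haE, haS⟩, ha0⟩ := (ne_bot_iff' _).mp (hE _ hspan)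
    obtain ⟨v, hv⟩ := Submodule.mem_span_singleton.mp haS
    have hfaL : f a ∈ L := by
      rw [← hv, smul_eq_mul, map_mul]
      exact L.smul_mem (f v) hfrL
    have hfaQE : f a ∈ QE := Submodule.subset_span ⟨a, haE, rfl⟩
    have : f a ∈ QE ⊓ L := ⟨hfaQE, hfaL⟩
    rw [disjoint_iff.mp hL.disjoint] at this
    exact ha0 (hinj a this)
  have hQEtop : QE = ⊤ := by
    have := codisjoint_iff.mp hL.codisjoint
    rwa [hLbot, sup_bot_eq] at this
  have h1 : (1 : Q) ∈ QE := by rw [hQEtop]; trivial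
  obtain ⟨s, hs, e, heE, hfe⟩ := loc_common_denom f hOre hfrac E h1
  rw [mul_one] at hfe
  have : s = e := by
    have h0 : f (s - e) = 0 := by rw [map_sub, hfe, sub_self]
    have := hinj _ h0
    exact sub_eq_zero.mp this
  exact ⟨e, heE, this ▸ hs⟩

include hOre hfrac hunits hinj in
lemma loc_semiprime [IsSemisimpleRing Q] : SemiprimeRing R := by
  intro x hx
  have hxx : x * x = 0 := by have := hx 1; rwa [mul_one] at this
  set E : Submodule R R :=
    { carrier := {r : R | x * r = 0 ∧ ∀ u : R, x * u * r = 0}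
      add_mem' := fun {a b} ha hb => by
        refine ⟨by rw [mul_add, ha.1, hb.1, add_zero], fun u => ?_⟩
        rw [mul_add, ha.2 u, hb.2 u, add_zero]
      zero_mem' := ⟨mul_zero x, fun u => mul_zero (x * u)⟩
      smul_mem' := fun c r hr => by
        refine ⟨?_, fun u => ?_⟩
        · have h := hr.2 c
          rw [smul_eq_mul, ← mul_assoc]
          exact h
        · have h := hr.2 (u * c)
          rw [← mul_assoc] at h
          rw [smul_eq_mul, ← mul_assoc]
          exact h } with hEdef
  have hEss : Ess E := by
    intro J hJ
    obtain ⟨j, hjJ, hj0⟩ := (ne_bot_iff' J).mp hJ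
    by_cases h1 : x * j = 0 ∧ ∀ u : R, x * u * j = 0
    · exact (ne_bot_iff' _).mpr ⟨j, ⟨h1, hjJ⟩, hj0⟩
    · push_neg at h1
      by_cases h2 : x * j = 0
      · obtain ⟨u, hu⟩ := h1 h2
        refine (ne_bot_iff' _).mpr ⟨x * u * j, ⟨⟨?_, fun v => ?_⟩, ?_⟩, hu⟩
        · rw [show x * (x * u * j) = (x * x) * (u * j) by simp only [mul_assoc], hxx, zero_mul]
        · rw [show x * v * (x * u * j) = (x * v * x) * (u * j) by simp only [mul_assoc],
            hx v, zero_mul]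
        · have : x * u * j = (x * u) • j := by rw [smul_eq_mul]
          rw [this]; exact J.smul_mem _ hjJ
      · refine (ne_bot_iff' _).mpr ⟨x * j, ⟨⟨?_, fun v => ?_⟩, ?_⟩, h2⟩
        · rw [← mul_assoc, hxx, zero_mul]
        · rw [show x * v * (x * j) = (x * v * x) * j by simp only [mul_assoc],
            hx v, zero_mul]
        · have : x * j = x • j := by rw [smul_eq_mul]
          rw [this]; exact J.smul_mem _ hjJ
  obtain ⟨c, hcE, hcreg⟩ := loc_ess_reg f hOre hfrac hunits hinj hEss
  exact reg_right_cancel hcreg hcE.1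

include hfrac hunits in
lemma loc_lreg_eq_reg [IsSemisimpleRing Q]
    (hker : ∀ r : R, f r = 0 → ∃ s ∈ reg R, s * r = 0) : lReg R = reg R := by
  refine Set.Subset.antisymm (fun c hc => ?_) Set.inter_subset_left
  have hQinj : ∀ q : Q, q * f c = 0 → q = 0 := by
    intro q hq
    obtain ⟨s, hs, r, hfr⟩ := hfrac q
    have h1 : f (r * c) = 0 := by
      rw [map_mul, ← hfr, mul_assoc, hq, mul_zero]
    obtain ⟨t, ht, htr⟩ := hker _ h1
    have h2 : (t * r) * c = 0 := by rw [mul_assoc]; exact htr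
    have h3 : t * r = 0 := hc _ h2
    have h4 : f s * q = 0 := by
      have : f t * (f s * q) = 0 := by rw [hfr, ← map_mul, h3, map_zero]
      by_contra hne
      exact unit_mul_ne_zero f hunits ht (by exact hne) this
    by_contra hne
    exact unit_mul_ne_zero f hunits hs hne h4
  -- right multiplication by f c is injective, hence surjective
  set ρ : Q →ₗ[Q] Q := LinearMap.toSpanSingleton Q Q (f c) with hρ
  have hρinj : Function.Injective ρ := by
    intro a b hab
    have : (a - b) * f c = 0 := by
      have h1 : ρ a = a * f c := by rw [hρ, LinearMap.toSpanSingleton_apply, smul_eq_mul]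
      have h2 : ρ b = b * f c := by rw [hρ, LinearMap.toSpanSingleton_apply, smul_eq_mul]
      rw [sub_mul, ← h1, ← h2, hab, sub_self]
    have := hQinj _ this
    exact sub_eq_zero.mp this
  have hρsurj : Function.Surjective ρ :=
    IsArtinian.surjective_of_injective_endomorphism ρ hρinj
  obtain ⟨y, hy⟩ := hρsurj 1
  have hy' : y * f c = 1 := by
    rw [← hy, hρ, LinearMap.toSpanSingleton_apply, smul_eq_mul]
  have hy'' : f c * y = 1 := by
    have h1 : (f c * y - 1) * f c = 0 := by
      rw [sub_mul, one_mul, mul_assoc, hy', mul_one, sub_self]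
    have := hQinj _ h1
    exact sub_eq_zero.mp this
  refine ⟨hc, fun z hz => ?_⟩
  have h1 : f c * f z = 0 := by rw [← map_mul, hz, map_zero]
  have h2 : f z = 0 := by
    have := congrArg (fun w => y * w) h1
    simp only [mul_zero] at this
    rwa [← mul_assoc, hy', one_mul] at this
  obtain ⟨t, ht, htz⟩ := hker _ h2
  exact reg_left_cancel ht htz


lemma simple_le_eq {N A : Submodule Q Q} (hN : IsSimpleModule Q N) (hA : A ≤ N) :
    A = ⊥ ∨ A = N := by
  rcases eq_bot_or_eq_top (Submodule.comap N.subtype A) with h | h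
  · left
    have := congrArg (Submodule.map N.subtype) h
    rwa [Submodule.map_comap_subtype, inf_eq_right.mpr hA, Submodule.map_bot] at this
  · right
    have := congrArg (Submodule.map N.subtype) h
    rwa [Submodule.map_comap_subtype, inf_eq_right.mpr hA, Submodule.map_top,
      Submodule.range_subtype] at this

include hOre hfrac hunits hinj in
lemma loc_lregIn [IsSemisimpleRing Q] (hsp : SemiprimeRing R) {U : Submodule R R}
    (hU : Unif U) : (lRegIn U).Nonempty := by
  by_contra hne
  rw [Set.not_nonempty_iff_eq_empty] at hne
  have hng : ∀ v ∈ U, ∃ x, x ∈ U ∧ x * v = 0 ∧ x ≠ 0 := by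
    intro v hv
    by_contra hno
    push_neg at hno
    have hmem : v ∈ lRegIn U := ⟨hv, fun x hx hxv => hno x hx hxv⟩
    rw [hne] at hmem
    exact hmem
  set QU : Submodule Q Q := Submodule.span Q (f '' (U : Set R)) with hQU
  have hsimple : ∀ A : Submodule Q Q, A ≤ QU → A ≠ ⊥ → A = QU := by
    intro A hA hAb
    obtain ⟨C, hC⟩ := ComplementedLattice.exists_isCompl A
    have hmod : A ⊔ (C ⊓ QU) = QU := by
      have h1 := sup_inf_assoc_of_le (x := A) C hA
      rw [codisjoint_iff.mp hC.codisjoint, top_inf_eq] at h1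
      exact h1.symm
    by_cases hbot : C ⊓ QU = ⊥
    · rw [hbot, sup_bot_eq] at hmod; exact hmod
    · exfalso
      have hgetu : ∀ B : Submodule Q Q, B ≤ QU → B ≠ ⊥ →
          ∃ x : R, x ∈ U ∧ x ≠ 0 ∧ f x ∈ B := by
        intro B hB hBb
        obtain ⟨q, hqB, hq0⟩ := (ne_bot_iff' B).mp hBb
        obtain ⟨s, hs, x, hxU, hfs⟩ := loc_common_denom f hOre hfrac U (hB hqB)
        refine ⟨x, hxU, fun h => ?_, by rw [← hfs]; exact B.smul_mem _ hqB⟩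
        exact unit_mul_ne_zero f hunits hs hq0 (by rw [hfs, h, map_zero])
      obtain ⟨x1, hx1U, hx10, hx1A⟩ := hgetu A hA hAb
      obtain ⟨x2, hx2U, hx20, hx2C⟩ := hgetu (C ⊓ QU) inf_le_right hbot
      have hV1 : (preIdeal f A ⊓ U : Submodule R R) ≠ ⊥ :=
        (ne_bot_iff' _).mpr ⟨x1, ⟨hx1A, hx1U⟩, hx10⟩
      have hV2 : (preIdeal f (C ⊓ QU) ⊓ U : Submodule R R) ≠ ⊥ :=
        (ne_bot_iff' _).mpr ⟨x2, ⟨hx2C, hx2U⟩, hx20⟩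
      obtain ⟨z, ⟨⟨hzA, _⟩, ⟨hzC, _⟩⟩, hz0⟩ :=
        (ne_bot_iff' _).mp (hU.2 _ _ inf_le_right inf_le_right hV1 hV2)
      have : f z ∈ A ⊓ C := ⟨hzA, hzC.1⟩
      rw [disjoint_iff.mp hC.disjoint] at this
      exact hz0 (hinj z this)
  have hzero : ∀ u ∈ U, ∀ u' ∈ U, u' * u = 0 := by
    intro u hu u' hu'
    set Vu : Submodule R R :=
      { carrier := {x : R | x ∈ U ∧ x * u = 0}
        add_mem' := fun {a b} ha hb =>
          ⟨U.add_mem ha.1 hb.1, by rw [add_mul, ha.2, hb.2, add_zero]⟩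
        zero_mem' := ⟨U.zero_mem, zero_mul u⟩
        smul_mem' := fun c x hx => ⟨U.smul_mem c hx.1, by
          rw [smul_eq_mul, mul_assoc, hx.2, mul_zero]⟩ } with hVu
    have hVub : Vu ≠ ⊥ := by
      obtain ⟨x, hxU, hxu, hx0⟩ := hng u hu
      exact (ne_bot_iff' _).mpr ⟨x, ⟨hxU, hxu⟩, hx0⟩
    have hQVu : Submodule.span Q (f '' (Vu : Set R)) = QU := by
      refine hsimple _ ?_ ?_
      · refine Submodule.span_le.mpr ?_
        rintro y ⟨x, hx, rfl⟩
        exact Submodule.subset_span ⟨x, hx.1, rfl⟩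
      · obtain ⟨x, hxV, hx0⟩ := (ne_bot_iff' Vu).mp hVub
        exact (ne_bot_iff' _).mpr ⟨f x, Submodule.subset_span ⟨x, hxV, rfl⟩,
          fun h => hx0 (hinj x h)⟩
    have hmem : f u' ∈ Submodule.span Q (f '' (Vu : Set R)) := by
      rw [hQVu]
      exact Submodule.subset_span ⟨u', hu', rfl⟩
    obtain ⟨t, ht, v, hvV, hfv⟩ := loc_common_denom f hOre hfrac Vu hmem
    have htu : t * u' = v := by
      have h0 : f (t * u' - v) = 0 := by rw [map_sub, map_mul, hfv, sub_self]
      exact sub_eq_zero.mp (hinj _ h0)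
    have h1 : t * (u' * u) = 0 := by rw [← mul_assoc, htu]; exact hvV.2
    exact reg_left_cancel ht h1
  obtain ⟨u, huU, hu0⟩ := (ne_bot_iff' U).mp hU.1
  refine hu0 (hsp u fun r => ?_)
  have hmemru : r * u ∈ U := by
    have := U.smul_mem r huU
    rwa [smul_eq_mul] at this
  rw [mul_assoc]
  exact hzero (r * u) hmemru u huU

include hOre hfrac in
lemma loc_common_denom_family :
    ∀ (m : ℕ) (q : Fin m → Q), ∃ t ∈ reg R, ∀ i, ∃ r : R, f t * q i = f r := by
  intro m
  induction m with
  | zero => exact fun q => ⟨1, one_mem_reg, fun i => i.elim0⟩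
  | succ m IH =>
    intro q
    obtain ⟨t, ht, hprop⟩ := IH (fun i => q i.castSucc)
    obtain ⟨s, hs, r, hfr⟩ := hfrac (q (Fin.last m))
    obtain ⟨w, hw, a, hwa⟩ := hOre t ht s
    refine ⟨w * s, mul_mem_reg hw hs, fun i => ?_⟩
    rcases Fin.eq_castSucc_or_eq_last i with ⟨i', rfl⟩ | rfl
    · obtain ⟨r', hr'⟩ := hprop i'
      exact ⟨a * r', by rw [hwa, map_mul, mul_assoc, hr', ← map_mul]⟩
    · exact ⟨w * r, by rw [map_mul, mul_assoc, hfr, ← map_mul]⟩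

include hOre hfrac hunits hinj in
lemma loc_finudim [IsSemisimpleRing Q] (h0 : (0 : R) ∉ reg R) :
    ∃ (n : ℕ) (U : Fin (n+1) → Submodule R R),
      (∀ i, Unif (U i)) ∧ (Indep U) ∧ Ess (⨆ i, U i) := by
  classical
  have h01R : (0 : R) ≠ 1 := by
    intro h
    exact h0 (h ▸ one_mem_reg)
  have hQnt : (0 : Q) ≠ 1 := by
    intro h
    refine h01R ?_
    have h1 : f (1 : R) = 0 := by rw [map_one, ← h]
    have := hinj 1 h1
    exact this.symm ▸ rfl
  obtain ⟨s, hsInd, hsSup, hsimp⟩ :=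
    IsSemisimpleModule.exists_sSupIndep_sSup_simples_eq_top Q Q
  have hsfin : s.Finite := WellFoundedGT.finite_of_sSupIndep hsInd
  have hsne : s.Nonempty := by
    rcases Set.eq_empty_or_nonempty s with rfl | h
    · rw [sSup_empty] at hsSup
      have hm : (1 : Q) ∈ (⊥ : Submodule Q Q) := by rw [hsSup]; trivial
      have h1 : (1 : Q) = 0 := by simpa using hm
      exact absurd h1.symm hQnt
    · exact h
  haveI := hsfin.fintype
  haveI : Nonempty s := hsne.to_subtype
  have hpos : Fintype.card s ≠ 0 := Fintype.card_ne_zero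
  obtain ⟨n, hn⟩ : ∃ n, Fintype.card s = n + 1 := Nat.exists_eq_succ_of_ne_zero hpos
  set e : s ≃ Fin (n+1) := Fintype.equivFinOfCardEq hn with he
  set S : Fin (n+1) → Submodule Q Q := fun i => ((e.symm i : s) : Submodule Q Q) with hSdef
  have hSmem : ∀ i, S i ∈ s := fun i => (e.symm i).2
  have hSsimp : ∀ i, IsSimpleModule Q (S i) := fun i => hsimp _ (hSmem i)
  have hSinj : ∀ i j, i ≠ j → S i ≠ S j := by
    intro i j hij h
    apply hij
    have h1 : e.symm i = e.symm j := Subtype.ext h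
    calc i = e (e.symm i) := (e.apply_symm_apply i).symm
    _ = e (e.symm j) := by rw [h1]
    _ = j := e.apply_symm_apply j
  have hStop : (⨆ i, S i) = ⊤ := by
    rw [hSdef]
    rw [show (⨆ i, ((e.symm i : s) : Submodule Q Q)) = ⨆ x : s, (x : Submodule Q Q) from
      e.symm.iSup_comp]
    rw [← sSup_eq_iSup']
    exact hsSup
  set U : Fin (n+1) → Submodule R R := fun i => preIdeal f (S i) with hUdef
  have hSb : ∀ i, S i ≠ ⊥ := by
    intro i h
    haveI := hSsimp i
    haveI := IsSimpleModule.nontrivial Q (S i)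
    obtain ⟨a, b, hab⟩ := exists_pair_ne ↥(S i)
    have h' := (Submodule.eq_bot_iff _).mp h
    exact hab (Subtype.ext (by rw [h' _ a.2, h' _ b.2]))
  have hUb : ∀ i, U i ≠ ⊥ := by
    intro i
    obtain ⟨q, hqS, hq0⟩ := (ne_bot_iff' _).mp (hSb i)
    obtain ⟨t, ht, r, hfr⟩ := hfrac q
    refine (ne_bot_iff' _).mpr ⟨r, ?_, ?_⟩
    · exact mem_preIdeal.mpr (by rw [← hfr]; exact (S i).smul_mem _ hqS)
    · intro h
      exact unit_mul_ne_zero f hunits ht hq0 (by rw [hfr, h, map_zero])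
  have hUu : ∀ i, Unif (U i) := by
    intro i
    refine ⟨hUb i, fun V W hV hW hVb hWb => ?_⟩
    have hspan : ∀ X : Submodule R R, X ≤ U i → X ≠ ⊥ →
        Submodule.span Q (f '' (X : Set R)) = S i := by
      intro X hX hXb
      have hle : Submodule.span Q (f '' (X : Set R)) ≤ S i :=
        Submodule.span_le.mpr (by rintro y ⟨x, hx, rfl⟩; exact (hX hx : f x ∈ S i))
      rcases simple_le_eq (hSsimp i) hle with h | h
      · exfalso
        obtain ⟨x, hxX, hx0⟩ := (ne_bot_iff' X).mp hXb
        have hmem : f x ∈ (⊥ : Submodule Q Q) := h ▸ Submodule.subset_span ⟨x, hxX, rfl⟩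
        exact hx0 (hinj x (by simpa using hmem))
      · exact h
    obtain ⟨v, hvV, hv0⟩ := (ne_bot_iff' V).mp hVb
    have hfv : f v ∈ Submodule.span Q (f '' (W : Set R)) := by
      rw [hspan W hW hWb, ← hspan V hV hVb]
      exact Submodule.subset_span ⟨v, hvV, rfl⟩
    obtain ⟨t, ht, w, hwW, hfw⟩ := loc_common_denom f hOre hfrac W hfv
    have htv : t * v = w := sub_eq_zero.mp (hinj _ (by rw [map_sub, map_mul, hfw, sub_self]))
    refine (ne_bot_iff' _).mpr ⟨t * v, ⟨?_, htv ▸ hwW⟩, fun h => hv0 (reg_left_cancel ht h)⟩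
    have hm := V.smul_mem t hvV
    rwa [smul_eq_mul] at hm
  have hUind : Indep U := by
    intro i
    rw [eq_bot_iff]
    intro x hx
    have hle : (⨆ j, ⨆ (_ : j ≠ i), U j) ≤ preIdeal f (sSup (s \ {S i})) := by
      refine iSup_le fun j => iSup_le fun hj => ?_
      refine preIdeal_mono (le_sSup ?_)
      exact ⟨hSmem j, by simp only [Set.mem_singleton_iff]; exact hSinj j i hj⟩
    have h2 : f x ∈ S i ⊓ sSup (s \ {S i}) := ⟨hx.1, hle hx.2⟩
    rw [disjoint_iff.mp (hsInd (hSmem i))] at h2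
    exact (Submodule.mem_bot R).mpr (hinj x (by simpa using h2))
  have hUess : Ess (⨆ i, U i) := by
    intro J hJ
    obtain ⟨a, haJ, ha0⟩ := (ne_bot_iff' J).mp hJ
    have hfa : f a ∈ (⨆ i, S i) := by rw [hStop]; trivial
    obtain ⟨g, hg, hgsum⟩ := (Submodule.mem_iSup_iff_exists_finsupp S (f a)).mp hfa
    obtain ⟨t, ht, hcex⟩ := loc_common_denom_family f hOre hfrac (n+1) (fun i => g i)
    choose c hcp using hcex
    have hcU : ∀ i, c i ∈ U i := fun i =>
      mem_preIdeal.mpr (by rw [← hcp i]; exact (S i).smul_mem _ (hg i))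
    have hsum : f (t * a) = f (∑ i ∈ g.support, c i) := by
      rw [map_mul]
      have h1 : f a = ∑ i ∈ g.support, g i := by rw [← hgsum]; rfl
      rw [h1, Finset.mul_sum, map_sum]
      exact Finset.sum_congr rfl fun i _ => hcp i
    have hta : t * a = ∑ i ∈ g.support, c i :=
      sub_eq_zero.mp (hinj _ (by rw [map_sub, hsum, sub_self]))
    refine (ne_bot_iff' _).mpr ⟨t * a, ⟨?_, ?_⟩, fun h => ha0 (reg_left_cancel ht h)⟩
    · rw [hta]
      exact Submodule.sum_mem _ fun i _ => (le_iSup U i) (hcU i)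
    · have hm := J.smul_mem t haJ
      rwa [smul_eq_mul] at hm
  exact ⟨n, U, hUu, hUind, hUess⟩


end Dir1

theorem dir1to2 {Q : Type u} [Ring Q] (f : R →+* Q) (hOre : IsLeftOre (reg R))
    (hloc : IsLeftLoc (reg R) f) (hss : IsSemisimpleRing Q) :
    SemiprimeRing R ∧ FinUdim R ∧ lReg R = reg R ∧
      ∀ U : Submodule R R, UniformIdeal U → (lRegIn U).Nonempty := by
  haveI := hss
  obtain ⟨hunits, hfrac, hkerIff⟩ := hloc
  have hOreC := hOre.2
  have hker : ∀ r : R, f r = 0 → ∃ s ∈ reg R, s * r = 0 := fun r h => (hkerIff r).mp h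
  have hinj : ∀ r : R, f r = 0 → r = 0 := fun r h => by
    obtain ⟨s, hs, hsr⟩ := hker r h
    exact reg_left_cancel hs hsr
  have hsp := loc_semiprime f hOreC hfrac hunits hinj
  refine ⟨hsp, ?_, ?_, ?_⟩
  · obtain ⟨n, U, hUu, hUind, hUess⟩ := loc_finudim f hOreC hfrac hunits hinj hOre.1.2.2
    exact ⟨n, U, hUu, hUind, hUess⟩
  · exact loc_lreg_eq_reg f hfrac hunits hker
  · exact fun U hU => loc_lregIn f hOreC hfrac hunits hinj hsp hU

end RingLevel
end Tools

/-- Theorem A28Feb15: `Q_{l,cl}(R)` is semisimple Artinian iff `R` is semiprime,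
`udim(_R R) < ∞`, `'C_R = C_R` and `'C_U ≠ ∅` for all uniform left ideals `U` of `R`. -/
theorem classicalLeftQuotient_semisimple_iff_lReg_eq_reg {R : Type u} [Ring R] :
    (IsLeftOre (reg R) ∧
      ∃ (Q : Type u) (_ : Ring Q) (f : R →+* Q),
        IsLeftLoc (reg R) f ∧ IsSemisimpleRing Q) ↔
    (SemiprimeRing R ∧ FinUdim R ∧ lReg R = reg R ∧
      ∀ U : Submodule R R, UniformIdeal U → (lRegIn U).Nonempty) := by
  constructor
  · rintro ⟨hOre, Q, instQ, f, hloc, hss⟩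
    letI := instQ
    exact dir1to2 f hOre hloc hss
  · rintro ⟨hsp, hfin, hlr, h'C⟩
    exact dir2to1 hsp hfin hlr h'C

end Bavula
end

section
/- Let R be a ring, 'S_l(R) the largest left denominator set of R contained in 'C_R, and 'Q_l(R) := 'S_l(R)⁻¹R the left regular left quotient ring of R. Then: (1) 'Q_l(R) is a left Artinian ring if and only if 'C_R is a left denominator set of R and 'Q_{l,cl}(R) := 'C_R⁻¹R is a left Artinian ring; if one of these equivalent conditions holds then 'S_l(R) = 'C_R and 'Q_l(R) = 'Q_{l,cl}(R). (2) 'Q_l(R) is a semisimple Artinian ring if and only if 'C_R is a left denominator set of R and 'Q_{l,cl}(R) is a semisimple Artinian ring; if one of these equivalent conditions holds then 'S_l(R) = 'C_R and 'Q_l(R) = 'Q_{l,cl}(R). -/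
universe u

namespace Bavula

section Aux

variable {R : Type u} [Ring R]

/-- In a left Artinian ring, a left regular element is a unit. -/
lemma isUnit_of_lreg_artinian {Q : Type u} [Ring Q] (hart : IsArtinianRing Q) (a : Q)
    (ha : ∀ x : Q, x * a = 0 → x = 0) : IsUnit a := by
  have hpow : ∀ n : ℕ, ∀ x : Q, x * a ^ n = 0 → x = 0 := by
    intro n
    induction n with
    | zero => intro x hx; simpa using hx
    | succ n ih =>
      intro x hx
      rw [pow_succ, ← mul_assoc] at hx
      exact ih _ (ha _ hx)
  have : IsArtinian Q Q := hart
  obtain ⟨n, hn⟩ := IsArtinian.monotone_stabilizes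
    (⟨fun n => OrderDual.toDual (Submodule.span Q {a ^ n}), by
      refine monotone_nat_of_le_succ fun n => ?_
      show Submodule.span Q {a ^ (n+1)} ≤ Submodule.span Q {a ^ n}
      rw [Submodule.span_le, Set.singleton_subset_iff]
      exact Submodule.mem_span_singleton.2 ⟨a, by rw [smul_eq_mul, ← pow_succ']⟩⟩ :
      ℕ →o (Submodule Q Q)ᵒᵈ)
  have heq : Submodule.span Q {a ^ n} = Submodule.span Q {a ^ (n+1)} :=
    congrArg OrderDual.ofDual (hn (n+1) (Nat.le_succ n))
  have hmem : a ^ n ∈ Submodule.span Q {a ^ (n+1)} := by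
    rw [← heq]; exact Submodule.mem_span_singleton_self _
  obtain ⟨q, hq⟩ := Submodule.mem_span_singleton.1 hmem
  rw [smul_eq_mul] at hq
  have hqa : q * a = 1 := by
    have h0 : (q * a - 1) * a ^ n = 0 := by
      rw [sub_mul, one_mul, mul_assoc, ← pow_succ', hq, sub_self]
    exact sub_eq_zero.1 (hpow n _ h0)
  have haq : a * q = 1 := by
    have h0 : (a * q - 1) * a = 0 := by
      rw [sub_mul, one_mul, mul_assoc, hqa, mul_one, sub_self]
    exact sub_eq_zero.1 (ha _ h0)
  exact ⟨⟨a, q, haq, hqa⟩, rfl⟩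

/-- The transfer relation between two localizations at the same set. -/
def LRel (S : Set R) {Q1 Q2 : Type u} [Ring Q1] [Ring Q2]
    (f1 : R →+* Q1) (f2 : R →+* Q2) (q1 : Q1) (q2 : Q2) : Prop :=
  ∃ s ∈ S, ∃ r : R, f1 s * q1 = f1 r ∧ f2 s * q2 = f2 r

section LRel

variable {S : Set R} {Q1 Q2 : Type u} [Ring Q1] [Ring Q2]
  (f1 : R →+* Q1) (f2 : R →+* Q2)

lemma lrel_symm {q1 : Q1} {q2 : Q2} (h : LRel S f1 f2 q1 q2) : LRel S f2 f1 q2 q1 := by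
  obtain ⟨s, hs, r, ha, hb⟩ := h
  exact ⟨s, hs, r, hb, ha⟩

lemma lrel_total (h1 : IsLeftLoc S f1) (h2 : IsLeftLoc S f2) (q1 : Q1) :
    ∃ q2 : Q2, LRel S f1 f2 q1 q2 := by
  obtain ⟨s, hs, r, hsr⟩ := h1.2.1 q1
  obtain ⟨u, hu⟩ := h2.1 s hs
  refine ⟨↑u⁻¹ * f2 r, s, hs, r, hsr, ?_⟩
  rw [← hu, Units.mul_inv_cancel_left]

lemma lrel_func (hden : IsLeftDenom S) (h1 : IsLeftLoc S f1) (h2 : IsLeftLoc S f2)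
    {q1 : Q1} {q2 q2' : Q2} (ha : LRel S f1 f2 q1 q2) (hb : LRel S f1 f2 q1 q2') :
    q2 = q2' := by
  obtain ⟨s, hs, r, h1a, h2a⟩ := ha
  obtain ⟨s', hs', r', h1b, h2b⟩ := hb
  obtain ⟨t, ht, u, htu⟩ := hden.1.2 s hs s'
  have key1 : f1 (u * r) = f1 (t * r') := by
    rw [map_mul, map_mul, ← h1a, ← h1b, ← mul_assoc, ← mul_assoc, ← map_mul, ← map_mul, htu]
  have hmem : u * r - t * r' ∈ ass S := (h1.2.2 _).1 (by rw [map_sub, key1, sub_self])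
  obtain ⟨w, hw, hw0⟩ := hmem
  have hww : w * (u * r) = w * (t * r') := by
    rw [mul_sub, sub_eq_zero] at hw0; exact hw0
  have key2 : f2 (u * r) = f2 (t * r') :=
    (h2.1 w hw).mul_left_cancel (by rw [← map_mul, ← map_mul, hww])
  have key3 : f2 (t * s') * q2 = f2 (t * s') * q2' := by
    calc f2 (t * s') * q2 = f2 (u * s) * q2 := by rw [htu]
      _ = f2 u * (f2 s * q2) := by rw [map_mul, mul_assoc]
      _ = f2 u * f2 r := by rw [h2a]
      _ = f2 (u * r) := by rw [map_mul]
      _ = f2 (t * r') := key2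
      _ = f2 t * (f2 s' * q2') := by rw [map_mul, h2b]
      _ = f2 (t * s') * q2' := by rw [map_mul, mul_assoc]
  exact (h2.1 _ (hden.1.1.2.1 t ht s' hs')).mul_left_cancel key3

lemma lrel_add (hden : IsLeftDenom S) {p1 q1 : Q1} {p2 q2 : Q2}
    (hp : LRel S f1 f2 p1 p2) (hq : LRel S f1 f2 q1 q2) :
    LRel S f1 f2 (p1 + q1) (p2 + q2) := by
  obtain ⟨s, hs, r, h1a, h2a⟩ := hp
  obtain ⟨s', hs', r', h1b, h2b⟩ := hq
  obtain ⟨t, ht, u, htu⟩ := hden.1.2 s hs s'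
  refine ⟨t * s', hden.1.1.2.1 t ht s' hs', u * r + t * r', ?_, ?_⟩
  · rw [mul_add, map_add, map_mul, map_mul, map_mul]
    congr 1
    · rw [← map_mul, htu, map_mul, mul_assoc, h1a]
    · rw [mul_assoc, h1b]
  · rw [mul_add, map_add, map_mul, map_mul, map_mul]
    congr 1
    · rw [← map_mul, htu, map_mul, mul_assoc, h2a]
    · rw [mul_assoc, h2b]

lemma lrel_mul (hden : IsLeftDenom S) {p1 q1 : Q1} {p2 q2 : Q2}
    (hp : LRel S f1 f2 p1 p2) (hq : LRel S f1 f2 q1 q2) :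
    LRel S f1 f2 (p1 * q1) (p2 * q2) := by
  obtain ⟨s, hs, r, h1a, h2a⟩ := hp
  obtain ⟨s', hs', r', h1b, h2b⟩ := hq
  obtain ⟨t, ht, u, htu⟩ := hden.1.2 s' hs' r
  refine ⟨t * s, hden.1.1.2.1 t ht s hs, u * r', ?_, ?_⟩
  · calc f1 (t * s) * (p1 * q1) = f1 t * (f1 s * p1) * q1 := by
          rw [map_mul, mul_assoc, mul_assoc, mul_assoc]
      _ = f1 (t * r) * q1 := by rw [h1a, map_mul]
      _ = f1 u * (f1 s' * q1) := by rw [htu, map_mul, mul_assoc]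
      _ = f1 (u * r') := by rw [h1b, map_mul]
  · calc f2 (t * s) * (p2 * q2) = f2 t * (f2 s * p2) * q2 := by
          rw [map_mul, mul_assoc, mul_assoc, mul_assoc]
      _ = f2 (t * r) * q2 := by rw [h2a, map_mul]
      _ = f2 u * (f2 s' * q2) := by rw [htu, map_mul, mul_assoc]
      _ = f2 (u * r') := by rw [h2b, map_mul]

lemma loc_unique (hden : IsLeftDenom S) (h1 : IsLeftLoc S f1) (h2 : IsLeftLoc S f2) :
    Nonempty (Q1 ≃+* Q2) := by
  choose φ hφ using lrel_total f1 f2 h1 h2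
  choose ψ hψ using lrel_total f2 f1 h2 h1
  have hinv1 : ∀ q, ψ (φ q) = q := fun q =>
    lrel_func f2 f1 hden h2 h1 (hψ (φ q)) (lrel_symm f1 f2 (hφ q))
  have hinv2 : ∀ q, φ (ψ q) = q := fun q =>
    lrel_func f1 f2 hden h1 h2 (hφ (ψ q)) (lrel_symm f2 f1 (hψ q))
  exact ⟨⟨⟨φ, ψ, hinv1, hinv2⟩,
    fun p q => lrel_func f1 f2 hden h1 h2 (hφ (p * q)) (lrel_mul f1 f2 hden (hφ p) (hφ q)),
    fun p q => lrel_func f1 f2 hden h1 h2 (hφ (p + q)) (lrel_add f1 f2 hden (hφ p) (hφ q))⟩⟩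

end LRel

lemma lReg_isLeftDenom {S : Set R} (hden : IsLeftDenom S) (hsub : S ⊆ lReg R)
    {Q : Type u} [Ring Q] (f : R →+* Q) (hloc : IsLeftLoc S f) (hart : IsArtinianRing Q) :
    IsLeftDenom (lReg R) := by
  have hone : (1 : R) ≠ 0 := fun h => hden.1.1.2.2 (h ▸ hden.1.1.1)
  have hunit : ∀ c ∈ lReg R, IsUnit (f c) := by
    intro c hc
    refine isUnit_of_lreg_artinian hart (f c) ?_
    intro q hq
    obtain ⟨s, hs, r, hsr⟩ := hloc.2.1 q
    have hrc : f (r * c) = 0 := by rw [map_mul, ← hsr, mul_assoc, hq, mul_zero]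
    obtain ⟨t, ht, htr⟩ := (hloc.2.2 _).1 hrc
    have htr0 : t * r = 0 := hc _ (by rw [← mul_assoc] at htr; exact htr)
    have hr0 : f r = 0 := (hloc.2.2 r).2 ⟨t, ht, htr0⟩
    rw [hr0] at hsr
    exact ((hloc.1 s hs).mul_right_eq_zero).1 hsr
  refine ⟨⟨⟨fun x hx => by rwa [mul_one] at hx, fun a ha b hb x hx => ha _ (hb _ (by
      rwa [← mul_assoc] at hx)), fun h0 => hone (h0 1 (mul_zero 1))⟩, ?_⟩, ?_⟩
  · intro c hc r
    obtain ⟨u, hu⟩ := hunit c hc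
    obtain ⟨s, hs, r'', hsr⟩ := hloc.2.1 (f r * ↑u⁻¹)
    have hkey : f (s * r) = f (r'' * c) := by
      have h2 : f r * ↑u⁻¹ * f c = f r := by
        rw [← hu, mul_assoc, Units.inv_mul, mul_one]
      calc f (s * r) = f s * (f r * ↑u⁻¹ * f c) := by rw [map_mul, h2]
        _ = f s * (f r * ↑u⁻¹) * f c := (mul_assoc _ _ _).symm
        _ = f r'' * f c := by rw [hsr]
        _ = f (r'' * c) := by rw [map_mul]
    have hmem : s * r - r'' * c ∈ ass S := (hloc.2.2 _).1 (by rw [map_sub, hkey, sub_self])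
    obtain ⟨w, hw, hw0⟩ := hmem
    have hww : w * (s * r) = w * (r'' * c) := by
      rw [mul_sub, sub_eq_zero] at hw0; exact hw0
    exact ⟨w * s, hsub (hden.1.1.2.1 w hw s hs), w * r'', by
      rw [mul_assoc, mul_assoc]; exact hww⟩
  · intro r c hc hrc
    have : f r = 0 := ((hunit c hc).mul_left_eq_zero).1 (by rw [← map_mul, hrc, map_zero])
    obtain ⟨t, ht, htr⟩ := (hloc.2.2 r).1 this
    exact ⟨t, hsub ht, htr⟩

end Aux

/-- Theorem 8Mar15: `'Q_l(R) = 'S_l(R)⁻¹R` is left Artinian (resp. semisimple Artinian)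
iff `'Q_{l,cl}(R) = 'C_R⁻¹R` is; and then `'S_l(R) = 'C_R` and `'Q_l(R) = 'Q_{l,cl}(R)`.
Here `S` stands for `'S_l(R)`, the largest left denominator set contained in `'C_R`. -/
theorem leftRegularLeftQuotient_artinian_semisimple_iff {R : Type u} [Ring R]
    (S : Set R) (hden : IsLeftDenom S) (hsub : S ⊆ lReg R)
    (hmax : ∀ T : Set R, IsLeftDenom T → T ⊆ lReg R → T ⊆ S) :
    -- (1) left Artinian case
    (((∃ (Q : Type u) (_ : Ring Q) (f : R →+* Q),
          IsLeftLoc S f ∧ IsArtinianRing Q) ↔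
        (IsLeftDenom (lReg R) ∧
          ∃ (Q : Type u) (_ : Ring Q) (f : R →+* Q),
            IsLeftLoc (lReg R) f ∧ IsArtinianRing Q)) ∧
      ((∃ (Q : Type u) (_ : Ring Q) (f : R →+* Q),
          IsLeftLoc S f ∧ IsArtinianRing Q) →
        S = lReg R ∧
        ∀ (Q1 : Type u) (_ : Ring Q1) (f1 : R →+* Q1), IsLeftLoc S f1 →
          ∀ (Q2 : Type u) (_ : Ring Q2) (f2 : R →+* Q2), IsLeftLoc (lReg R) f2 →
            Nonempty (Q1 ≃+* Q2))) ∧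
    -- (2) semisimple Artinian case
    (((∃ (Q : Type u) (_ : Ring Q) (f : R →+* Q),
          IsLeftLoc S f ∧ IsSemisimpleRing Q) ↔
        (IsLeftDenom (lReg R) ∧
          ∃ (Q : Type u) (_ : Ring Q) (f : R →+* Q),
            IsLeftLoc (lReg R) f ∧ IsSemisimpleRing Q)) ∧
      ((∃ (Q : Type u) (_ : Ring Q) (f : R →+* Q),
          IsLeftLoc S f ∧ IsSemisimpleRing Q) →
        S = lReg R ∧
        ∀ (Q1 : Type u) (_ : Ring Q1) (f1 : R →+* Q1), IsLeftLoc S f1 →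
          ∀ (Q2 : Type u) (_ : Ring Q2) (f2 : R →+* Q2), IsLeftLoc (lReg R) f2 →
            Nonempty (Q1 ≃+* Q2))) := by
  have hback : IsLeftDenom (lReg R) → S = lReg R := fun hd =>
    Set.Subset.antisymm hsub (hmax _ hd fun x hx => hx)
  constructor
  · constructor
    · constructor
      · rintro ⟨Q, iQ, f, hloc, hart⟩
        have hd : IsLeftDenom (lReg R) := lReg_isLeftDenom hden hsub f hloc hart
        have hSe := hback hd
        exact ⟨hd, Q, iQ, f, hSe ▸ hloc, hart⟩
      · rintro ⟨hd, Q, iQ, f, hloc, hart⟩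
        have hSe := hback hd
        exact ⟨Q, iQ, f, by rw [hSe]; exact hloc, hart⟩
    · rintro ⟨Q, iQ, f, hloc, hart⟩
      have hd : IsLeftDenom (lReg R) := lReg_isLeftDenom hden hsub f hloc hart
      have hSe := hback hd
      refine ⟨hSe, fun Q1 i1 g1 hg1 Q2 i2 g2 hg2 => ?_⟩
      exact loc_unique g1 g2 hden hg1 (by rw [hSe]; exact hg2)
  · constructor
    · constructor
      · rintro ⟨Q, iQ, f, hloc, hss⟩
        have hart : IsArtinianRing Q := by
          letI := iQ; letI : IsSemisimpleRing Q := hss; infer_instance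
        have hd : IsLeftDenom (lReg R) := lReg_isLeftDenom hden hsub f hloc hart
        have hSe := hback hd
        exact ⟨hd, Q, iQ, f, hSe ▸ hloc, hss⟩
      · rintro ⟨hd, Q, iQ, f, hloc, hss⟩
        have hSe := hback hd
        exact ⟨Q, iQ, f, by rw [hSe]; exact hloc, hss⟩
    · rintro ⟨Q, iQ, f, hloc, hss⟩
      have hart : IsArtinianRing Q := by
        letI := iQ; letI : IsSemisimpleRing Q := hss; infer_instance
      have hd : IsLeftDenom (lReg R) := lReg_isLeftDenom hden hsub f hloc hart
      have hSe := hback hd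
      refine ⟨hSe, fun Q1 i1 g1 hg1 Q2 i2 g2 hg2 => ?_⟩
      exact loc_unique g1 g2 hden hg1 (by rw [hSe]; exact hg2)

end Bavula
end

section
/- Let R be a ring, 'S := 'S_l(R) the largest left denominator set of R contained in 'C_R, and 'a := ass_R('S). Then: (1) 'S = 'C_R ∩ ('S + 'a); (2) 'a is the largest element of the poset 'Ass_l(R) := {ass_R(S) | S is a left denominator set of R with S ⊆ 'C_R} ordered by inclusion; (3) 'S is a maximal element (with respect to inclusion) of the set {S | S is a left denominator set of R with S = 'C_R ∩ (S + ass_R(S))}; (4) 'S + 'a is a left denominator set of R with ass_R('S + 'a) = 'a; (5) 'Q_l(R) := 'S⁻¹R ≅ ('S + 'a)⁻¹R. -/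
universe u

namespace Bavula

open scoped Pointwise

section Aux
variable {R : Type u} [Ring R] {S : Set R}

theorem ass_mul_left (hden : IsLeftDenom S) (r : R) {x : R} (hx : x ∈ ass S) :
    r * x ∈ ass S := by
  obtain ⟨s, hs, hsx⟩ := hx
  obtain ⟨s', hs', r', h⟩ := hden.1.2 s hs r
  exact ⟨s', hs', by rw [← mul_assoc, h, mul_assoc, hsx, mul_zero]⟩

theorem ass_mul_right {x : R} (hx : x ∈ ass S) (r : R) : x * r ∈ ass S := by
  obtain ⟨s, hs, hsx⟩ := hx
  exact ⟨s, hs, by rw [← mul_assoc, hsx, zero_mul]⟩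

theorem ass_neg {x : R} (hx : x ∈ ass S) : -x ∈ ass S := by
  obtain ⟨s, hs, hsx⟩ := hx
  exact ⟨s, hs, by rw [mul_neg, hsx, neg_zero]⟩

theorem zero_mem_ass (h1 : (1 : R) ∈ S) : (0 : R) ∈ ass S := ⟨1, h1, mul_zero 1⟩

theorem ass_add_mem (hden : IsLeftDenom S) {x y : R} (hx : x ∈ ass S) (hy : y ∈ ass S) :
    x + y ∈ ass S := by
  obtain ⟨s1, hs1, h1⟩ := hx
  obtain ⟨s2, hs2, h2⟩ := hy
  obtain ⟨s', hs', r', h⟩ := hden.1.2 s2 hs2 s1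
  refine ⟨s' * s1, hden.1.1.2.1 _ hs' _ hs1, ?_⟩
  rw [mul_add, mul_assoc, h1, mul_zero, h, mul_assoc, h2, mul_zero, add_zero]

/-- For `t ∈ S + ass S` there is `s₁ ∈ S` with `s₁ * t ∈ S`. -/
theorem exists_mul_mem_left (hden : IsLeftDenom S) {t : R} (ht : t ∈ S + ass S) :
    ∃ s1 ∈ S, s1 * t ∈ S := by
  obtain ⟨s, hs, x, ⟨s1, hs1, h0⟩, rfl⟩ := ht
  refine ⟨s1, hs1, ?_⟩
  rw [mul_add, h0, add_zero]
  exact hden.1.1.2.1 _ hs1 _ hs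

theorem subset_add_ass (h1 : (1 : R) ∈ S) : S ⊆ S + ass S := fun s hs => by
  simpa using Set.add_mem_add hs (zero_mem_ass h1)

theorem ass_add_ass (hden : IsLeftDenom S) : ass (S + ass S) = ass S := by
  ext r
  constructor
  · rintro ⟨u, ⟨s, hs, x, ⟨s1, hs1, h0⟩, rfl⟩, hur⟩
    refine ⟨s1 * s, hden.1.1.2.1 _ hs1 _ hs, ?_⟩
    have : s1 * s * r = s1 * ((s + x) * r) - s1 * x * r := by noncomm_ring
    rw [this, hur, mul_zero, h0, zero_mul, zero_sub, neg_zero]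
  · rintro ⟨s, hs, hsr⟩
    exact ⟨s, subset_add_ass hden.1.1.1 hs, hsr⟩

theorem isLeftDenom_add (hden : IsLeftDenom S) (hsub : S ⊆ lReg R) :
    IsLeftDenom (S + ass S) := by
  have h1S : (1 : R) ∈ S := hden.1.1.1
  have hmul : IsMulSet (S + ass S) := by
    refine ⟨subset_add_ass h1S h1S, ?_, ?_⟩
    · rintro _ ⟨s1, hs1, x1, hx1, rfl⟩ _ ⟨s2, hs2, x2, hx2, rfl⟩
      have key : (s1 + x1) * (s2 + x2) = s1 * s2 + (s1 * x2 + (x1 * s2 + x1 * x2)) := by noncomm_ring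
      rw [key]
      exact Set.add_mem_add (hden.1.1.2.1 _ hs1 _ hs2)
        (ass_add_mem hden (ass_mul_left hden _ hx2)
          (ass_add_mem hden (ass_mul_right hx1 _) (ass_mul_right hx1 _)))
    · rintro ⟨s, hs, x, ⟨t, ht, htx⟩, hsx⟩
      have hx : x = -s := eq_neg_of_add_eq_zero_right hsx
      have hts : t * s = 0 := by
        have := htx
        rw [hx, mul_neg, neg_eq_zero] at this
        exact this
      exact hden.1.1.2.2 (hsub hs t hts ▸ ht)
  refine ⟨⟨hmul, ?_⟩, ?_⟩
  · -- left Ore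
    intro t ht r
    obtain ⟨s1, hs1, hst⟩ := exists_mul_mem_left hden ht
    obtain ⟨s', hs', r', h⟩ := hden.1.2 _ hst r
    exact ⟨s', subset_add_ass h1S hs', r' * s1, by rw [h, mul_assoc]⟩
  · -- denominator condition
    rintro r _ ⟨s, hs, x, hx, rfl⟩ hr0
    have hrs : r * s ∈ ass S := by
      have : r * s = r * (s + x) + -(r * x) := by noncomm_ring
      rw [this, hr0, zero_add]
      exact ass_neg (ass_mul_left hden r hx)
    obtain ⟨s2, hs2, h2⟩ := hrs
    have h2' : (s2 * r) * s = 0 := by rw [mul_assoc]; exact h2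
    obtain ⟨t, ht, htr⟩ := hden.2 _ s hs h2'
    exact ⟨t * s2, subset_add_ass h1S (hden.1.1.2.1 _ ht _ hs2), by rw [mul_assoc]; exact htr⟩

end Aux

section Loc
open OreLocalization
variable {R : Type u} [Ring R]

/-- The submonoid attached to a multiplicative set. -/
def denomSubmonoid (S : Set R) (h : IsMulSet S) : Submonoid R where
  carrier := S
  one_mem' := h.1
  mul_mem' := fun {a b} ha hb => h.2.1 a ha b hb

theorem oreSet_nonempty (S : Set R) (hden : IsLeftDenom S) :
    Nonempty (OreSet (denomSubmonoid S hden.1.1)) := by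
  rw [nonempty_oreSet_iff]
  constructor
  · rintro r1 r2 ⟨s, hs⟩ h
    have h0 : (r1 - r2) * s = 0 := by rw [sub_mul, h, sub_self]
    obtain ⟨t, ht, htr⟩ := hden.2 _ s hs h0
    refine ⟨⟨t, ht⟩, ?_⟩
    have h3 : t * (r1 - r2) = 0 := htr
    rw [mul_sub, sub_eq_zero] at h3
    exact h3
  · rintro r ⟨s, hs⟩
    obtain ⟨s', hs', r', h⟩ := hden.1.2 s hs r
    exact ⟨r', ⟨s', hs'⟩, h⟩

theorem loc_equiv_canonical {S : Set R} (hden : IsLeftDenom S)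
    [OreSet (denomSubmonoid S hden.1.1)]
    {Q : Type u} [Ring Q] {f : R →+* Q} (hf : IsLeftLoc S f) :
    Nonempty (OreLocalization (denomSubmonoid S hden.1.1) R ≃+* Q) := by
  let S' : Submonoid R := denomSubmonoid S hden.1.1
  have hu : ∀ s : S', IsUnit (f s) := fun s => hf.1 s s.2
  let fS : S' →* Units Q :=
  { toFun := fun s => (hu s).unit
    map_one' := by ext; simp
    map_mul' := fun a b => by ext; simp }
  have hfSval : ∀ s : S', ((fS s : Units Q) : Q) = f s := fun s => (hu s).unit_spec
  have hcomm : ∀ s : S', f s = fS s := fun s => (hfSval s).symm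
  have hinj : Function.Injective (universalHom f fS hcomm) := by
    rw [injective_iff_map_eq_zero]
    intro x hx
    induction x using OreLocalization.ind with
    | _ r s =>
      rw [universalHom_apply] at hx
      have hfr : f r = 0 := by
        have h5 := congrArg (fun z => ((fS s : Units Q) : Q) * z) hx
        simpa [Units.mul_inv_cancel_left] using h5
      obtain ⟨t, ht, htr⟩ := (hf.2.2 r).mp hfr
      rw [OreLocalization.expand' r s ⟨t, ht⟩]
      have h6 : (⟨t, ht⟩ : S') • r = (0 : R) := by
        simp [Submonoid.smul_def, smul_eq_mul, htr]
      rw [h6, zero_oreDiv]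
  have hsurj : Function.Surjective (universalHom f fS hcomm) := by
    intro q
    obtain ⟨s, hs, r, hq⟩ := hf.2.1 q
    refine ⟨r /ₒ ⟨s, hs⟩, ?_⟩
    rw [universalHom_apply]
    have h7 : ((fS ⟨s, hs⟩ : Units Q) : Q) * q = f r := by rw [hfSval]; exact hq
    rw [← h7, Units.inv_mul_cancel_left]
  exact ⟨RingEquiv.ofBijective _ ⟨hinj, hsurj⟩⟩

theorem isLeftLoc_unique {S : Set R} (hden : IsLeftDenom S)
    {Q1 : Type u} [Ring Q1] {f1 : R →+* Q1} (h1 : IsLeftLoc S f1)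
    {Q2 : Type u} [Ring Q2] {f2 : R →+* Q2} (h2 : IsLeftLoc S f2) :
    Nonempty (Q1 ≃+* Q2) := by
  obtain ⟨inst⟩ := oreSet_nonempty S hden
  obtain ⟨e1⟩ := loc_equiv_canonical hden h1
  obtain ⟨e2⟩ := loc_equiv_canonical hden h2
  exact ⟨e1.symm.trans e2⟩

end Loc

open scoped Pointwise in
/-- Theorem 9Mar15: properties of `'S = 'S_l(R)` (the largest left denominator set
contained in `'C_R`) and of `'a = ass_R('S)`. -/
theorem largestLeftRegularDenominator_properties {R : Type u} [Ring R]
    (S : Set R) (hden : IsLeftDenom S) (hsub : S ⊆ lReg R)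
    (hmax : ∀ T : Set R, IsLeftDenom T → T ⊆ lReg R → T ⊆ S) :
    -- (1)
    S = lReg R ∩ (S + ass S) ∧
    -- (2) 'a is the largest element of 'Ass_l(R)
    (ass S ∈ {A : Set R | ∃ T : Set R, IsLeftDenom T ∧ T ⊆ lReg R ∧ ass T = A} ∧
      ∀ T : Set R, IsLeftDenom T → T ⊆ lReg R → ass T ⊆ ass S) ∧
    -- (3) 'S is a maximal element of {T | T ∈ Den_l(R), T = 'C_R ∩ (T + ass T)}
    ((IsLeftDenom S ∧ S = lReg R ∩ (S + ass S)) ∧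
      ∀ T : Set R, IsLeftDenom T → T = lReg R ∩ (T + ass T) → S ⊆ T → T = S) ∧
    -- (4)
    (IsLeftDenom (S + ass S) ∧ ass (S + ass S) = ass S) ∧
    -- (5) 'Q_l(R) ≅ ('S + 'a)⁻¹R
    (∀ (Q1 : Type u) (_ : Ring Q1) (f1 : R →+* Q1), IsLeftLoc S f1 →
      ∀ (Q2 : Type u) (_ : Ring Q2) (f2 : R →+* Q2), IsLeftLoc (S + ass S) f2 →
        Nonempty (Q1 ≃+* Q2)) := by
  have h1S : (1 : R) ∈ S := hden.1.1.1
  have hassEq : ass (S + ass S) = ass S := ass_add_ass hden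
  have hdenAdd : IsLeftDenom (S + ass S) := isLeftDenom_add hden hsub
  have hST : S ⊆ lReg R ∩ (S + ass S) := fun s hs => ⟨hsub hs, subset_add_ass h1S hs⟩
  have h1T : (1 : R) ∈ lReg R ∩ (S + ass S) := hST h1S
  have hTden : IsLeftDenom (lReg R ∩ (S + ass S)) := by
    refine ⟨⟨⟨h1T, ?_, fun h => hdenAdd.1.1.2.2 h.2⟩, ?_⟩, ?_⟩
    · rintro a ⟨ha1, ha2⟩ b ⟨hb1, hb2⟩
      refine ⟨fun x hx => ?_, hdenAdd.1.1.2.1 a ha2 b hb2⟩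
      rw [← mul_assoc] at hx
      exact ha1 x (hb1 _ hx)
    · rintro t ⟨htreg, htadd⟩ r
      obtain ⟨s1, hs1, hst⟩ := exists_mul_mem_left hden htadd
      obtain ⟨s', hs', r', h⟩ := hden.1.2 _ hst r
      exact ⟨s', hST hs', r' * s1, by rw [h, mul_assoc]⟩
    · rintro r t ⟨htreg, _⟩ h
      exact ⟨1, h1T, by rw [htreg r h, mul_zero]⟩
  have hTS : lReg R ∩ (S + ass S) ⊆ S :=
    hmax _ hTden Set.inter_subset_left
  have part1 : S = lReg R ∩ (S + ass S) := Set.Subset.antisymm hST hTS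
  refine ⟨part1, ⟨⟨S, hden, hsub, rfl⟩, ?_⟩, ⟨⟨hden, part1⟩, ?_⟩, ⟨hdenAdd, hassEq⟩, ?_⟩
  · -- (2)
    intro T hT hTsub x hx
    obtain ⟨t, ht, h⟩ := hx
    exact ⟨t, hmax T hT hTsub ht, h⟩
  · -- (3)
    intro T hT hTeq hSsubT
    have hTlReg : T ⊆ lReg R := fun x hx => by
      rw [hTeq] at hx; exact hx.1
    exact Set.Subset.antisymm (hmax T hT hTlReg) hSsubT
  · -- (5)
    intro Q1 i1 f1 hf1 Q2 i2 f2 hf2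
    letI := i1; letI := i2
    have hf2' : IsLeftLoc S f2 := by
      refine ⟨fun s hs => hf2.1 s (subset_add_ass h1S hs), ?_, fun r => ?_⟩
      · intro q
        obtain ⟨u, hu, r, hq⟩ := hf2.2.1 q
        obtain ⟨s, hs, x, hx, rfl⟩ := hu
        have hx0 : f2 x = 0 := (hf2.2.2 x).mpr (by rw [hassEq]; exact hx)
        refine ⟨s, hs, r, ?_⟩
        rw [map_add, hx0, add_zero] at hq
        exact hq
      · rw [hf2.2.2 r, hassEq]
    exact isLeftLoc_unique hden hf1 hf2'


end Bavula
end

section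
/- Let R be a ring, 'C = 'C_R and a = ass_R('C). Suppose that a is an ideal of R, that the set 'C̄ := π('C) is a dense subset of C_{R̄} in R̄ := R/a (where π : R → R̄, r ↦ r + a), and that C_{R̄} is a left Ore set of R̄. Then: (1) 'C is a left denominator set of R with ass_R('C) = a, and 'C̄ is a left denominator set of R̄ with ass_{R̄}('C̄) = 0; (2) π⁻¹(C_{R̄}) is a left denominator set of R with ass_R(π⁻¹(C_{R̄})) = a, and 'C ⊆ π⁻¹(C_{R̄}); (3) 'Q_{l,cl}(R) := 'C⁻¹R ≅ 'C̄⁻¹R̄ ≅ (π⁻¹(C_{R̄}))⁻¹R ≅ Q_{l,cl}(R̄). -/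
universe u

namespace Bavula

section Aux

/-- Uniqueness of left localization: a homomorphism between two realizations. -/
theorem locHom_aux {R Q1 Q2 : Type u} [Ring R] [Ring Q1] [Ring Q2] (S : Set R)
    (h1 : (1 : R) ∈ S)
    (hmul : ∀ a ∈ S, ∀ b ∈ S, a * b ∈ S)
    (hore : ∀ s ∈ S, ∀ r : R, ∃ s' ∈ S, ∃ r' : R, s' * r = r' * s)
    (f : R →+* Q1) (g : R →+* Q2)
    (hf : IsLeftLoc S f) (hg : IsLeftLoc S g) :
    ∃ φ : Q1 →+* Q2, ∀ q : Q1, ∀ s ∈ S, ∀ r : R, f s * q = f r → g s * φ q = g r := by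
  have gcan : ∀ s ∈ S, ∀ x y : Q2, g s * x = g s * y → x = y := fun s hs x y h =>
    (hg.1 s hs).mul_left_cancel h
  have main : ∀ q : Q1, ∃ p : Q2, ∀ s ∈ S, ∀ r : R, f s * q = f r → g s * p = g r := by
    intro q
    obtain ⟨s₀, hs₀, r₀, h₀⟩ := hf.2.1 q
    obtain ⟨v, hv⟩ := hg.1 s₀ hs₀
    refine ⟨(↑v⁻¹ : Q2) * g r₀, ?_⟩
    have hp0 : g s₀ * ((↑v⁻¹ : Q2) * g r₀) = g r₀ := by
      rw [← hv, ← mul_assoc, Units.mul_inv, one_mul]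
    intro s hs r hr
    obtain ⟨t, ht, u, htu⟩ := hore s₀ hs₀ s
    have e1 : f (t * r) = f (u * r₀) := by
      calc f (t * r) = f t * (f s * q) := by rw [map_mul, hr]
        _ = f (t * s) * q := by rw [map_mul, mul_assoc]
        _ = f u * (f s₀ * q) := by rw [htu, map_mul, mul_assoc]
        _ = f (u * r₀) := by rw [h₀, ← map_mul]
    have e2 : t * r - u * r₀ ∈ ass S := (hf.2.2 _).mp (by rw [map_sub, e1, sub_self])
    obtain ⟨d, hd, hde⟩ := e2
    rw [mul_sub] at hde
    have e3 : d * (t * r) = d * (u * r₀) := sub_eq_zero.mp hde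
    refine gcan (d * t) (hmul d hd t ht) _ _ ?_
    calc g (d * t) * (g s * ((↑v⁻¹ : Q2) * g r₀))
        = g ((d * t) * s) * ((↑v⁻¹ : Q2) * g r₀) := by rw [← mul_assoc, ← map_mul]
      _ = g ((d * u) * s₀) * ((↑v⁻¹ : Q2) * g r₀) := by
          rw [mul_assoc d t s, htu, ← mul_assoc d u s₀]
      _ = g (d * u) * (g s₀ * ((↑v⁻¹ : Q2) * g r₀)) := by rw [map_mul, mul_assoc]
      _ = g (d * u) * g r₀ := by rw [hp0]
      _ = g (d * (t * r)) := by rw [← map_mul, mul_assoc d u r₀, ← e3]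
      _ = g (d * t) * g r := by rw [← mul_assoc, map_mul]
  choose φ0 hφ0 using main
  have hone : φ0 1 = 1 := by
    have := hφ0 1 1 h1 1 (by rw [mul_one])
    rwa [map_one, one_mul] at this
  have hzero : φ0 0 = 0 := by
    have := hφ0 0 1 h1 0 (by rw [map_zero, mul_zero])
    rwa [map_one, map_zero, one_mul] at this
  have hadd : ∀ x y : Q1, φ0 (x + y) = φ0 x + φ0 y := by
    intro x y
    obtain ⟨s, hs, r, hr⟩ := hf.2.1 x
    obtain ⟨s', hs', r', hr'⟩ := hf.2.1 y
    obtain ⟨t, ht, u, htu⟩ := hore s' hs' s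
    have hts : t * s ∈ S := hmul t ht s hs
    have hx : f (t * s) * x = f (t * r) := by rw [map_mul, mul_assoc, hr, ← map_mul]
    have hy : f (t * s) * y = f (u * r') := by rw [htu, map_mul, mul_assoc, hr', ← map_mul]
    have hxy : f (t * s) * (x + y) = f (t * r + u * r') := by rw [mul_add, hx, hy, map_add]
    have H := hφ0 (x + y) (t * s) hts _ hxy
    have Hx := hφ0 x (t * s) hts _ hx
    have Hy := hφ0 y (t * s) hts _ hy
    refine gcan (t * s) hts _ _ ?_
    rw [H, mul_add, Hx, Hy, ← map_add]
  have hmulmap : ∀ x y : Q1, φ0 (x * y) = φ0 x * φ0 y := by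
    intro x y
    obtain ⟨s, hs, r, hr⟩ := hf.2.1 x
    obtain ⟨s', hs', r', hr'⟩ := hf.2.1 y
    obtain ⟨t, ht, u, htu⟩ := hore s' hs' r
    have hts : t * s ∈ S := hmul t ht s hs
    have hxy : f (t * s) * (x * y) = f (u * r') := by
      calc f (t * s) * (x * y) = f t * ((f s * x) * y) := by
            rw [map_mul, mul_assoc, ← mul_assoc (f s) x y]
        _ = f (u * s') * y := by rw [hr, ← mul_assoc, ← map_mul, htu]
        _ = f u * (f s' * y) := by rw [map_mul, mul_assoc]
        _ = f (u * r') := by rw [hr', ← map_mul]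
    have H := hφ0 (x * y) (t * s) hts _ hxy
    have Hx := hφ0 x s hs r hr
    have Hy := hφ0 y s' hs' r' hr'
    refine gcan (t * s) hts _ _ ?_
    rw [H]
    symm
    calc g (t * s) * (φ0 x * φ0 y) = g t * ((g s * φ0 x) * φ0 y) := by
          rw [map_mul, mul_assoc, ← mul_assoc (g s) (φ0 x) (φ0 y)]
      _ = g (u * s') * φ0 y := by rw [Hx, ← mul_assoc, ← map_mul, htu]
      _ = g u * (g s' * φ0 y) := by rw [map_mul, mul_assoc]
      _ = g (u * r') := by rw [Hy, ← map_mul]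
  exact ⟨{ toFun := φ0, map_one' := hone, map_mul' := hmulmap, map_zero' := hzero,
           map_add' := hadd }, hφ0⟩

/-- Uniqueness of left localization, as a ring isomorphism. -/
theorem locEquiv_aux {R Q1 Q2 : Type u} [Ring R] [Ring Q1] [Ring Q2] (S : Set R)
    (h1 : (1 : R) ∈ S)
    (hmul : ∀ a ∈ S, ∀ b ∈ S, a * b ∈ S)
    (hore : ∀ s ∈ S, ∀ r : R, ∃ s' ∈ S, ∃ r' : R, s' * r = r' * s)
    (f : R →+* Q1) (g : R →+* Q2)
    (hf : IsLeftLoc S f) (hg : IsLeftLoc S g) : Nonempty (Q1 ≃+* Q2) := by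
  obtain ⟨φ, hφ⟩ := locHom_aux S h1 hmul hore f g hf hg
  obtain ⟨ψ, hψ⟩ := locHom_aux S h1 hmul hore g f hg hf
  refine ⟨{ toFun := φ, invFun := ψ, left_inv := ?_, right_inv := ?_,
            map_mul' := map_mul φ, map_add' := map_add φ }⟩
  · intro q
    obtain ⟨s, hs, r, hr⟩ := hf.2.1 q
    exact (hf.1 s hs).mul_left_cancel ((hψ (φ q) s hs r (hφ q s hs r hr)).trans hr.symm)
  · intro q
    obtain ⟨s, hs, r, hr⟩ := hg.2.1 q
    exact (hg.1 s hs).mul_left_cancel ((hφ (ψ q) s hs r (hψ q s hs r hr)).trans hr.symm)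

end Aux

/-- Theorem 11Mar15: sufficient conditions for `'Q_{l,cl}(R) ≅ Q_{l,cl}(R/a)` where
`a = ass_R('C_R)`. -/
theorem classicalLeftRegularLeftQuotient_iso_quotient {R : Type u} [Ring R]
    (hIdeal : IsIdealSet (ass (lReg R)))
    (Rb : Type u) [Ring Rb] (π : R →+* Rb) (hq : IsQuotBy (ass (lReg R)) π)
    (hsub : π '' lReg R ⊆ reg Rb)
    (hdense : DenseIn (π '' lReg R) (reg Rb))
    (hOre : IsLeftOre (reg Rb)) :
    -- (1)
    (IsLeftDenom (lReg R) ∧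
      IsLeftDenom (π '' lReg R) ∧ ass (π '' lReg R) = {0}) ∧
    -- (2)
    (IsLeftDenom (π ⁻¹' reg Rb) ∧ ass (π ⁻¹' reg Rb) = ass (lReg R) ∧
      lReg R ⊆ π ⁻¹' reg Rb) ∧
    -- (3) 'Q_{l,cl}(R) ≅ 'C̄⁻¹R̄ ≅ (π⁻¹(C_{R̄}))⁻¹R ≅ Q_{l,cl}(R̄)
    (∀ (Q1 : Type u) (_ : Ring Q1) (f1 : R →+* Q1), IsLeftLoc (lReg R) f1 →
      (∀ (Q2 : Type u) (_ : Ring Q2) (f2 : Rb →+* Q2),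
        IsLeftLoc (π '' lReg R) f2 → Nonempty (Q1 ≃+* Q2)) ∧
      (∀ (Q3 : Type u) (_ : Ring Q3) (f3 : R →+* Q3),
        IsLeftLoc (π ⁻¹' reg Rb) f3 → Nonempty (Q1 ≃+* Q3)) ∧
      (∀ (Q4 : Type u) (_ : Ring Q4) (f4 : Rb →+* Q4),
        IsLeftLoc (reg Rb) f4 → Nonempty (Q1 ≃+* Q4))) := by
  obtain ⟨hqsurj, hqker⟩ := hq
  obtain ⟨⟨hob1, hobmul, hob0⟩, horeb⟩ := hOre
  -- basic facts about left regular elements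
  have h1C : (1 : R) ∈ lReg R := fun x hx => by simpa using hx
  have hmulC : ∀ a ∈ lReg R, ∀ b ∈ lReg R, a * b ∈ lReg R := fun a ha b hb x hx =>
    ha x (hb (x * a) (by rw [mul_assoc]; exact hx))
  have hCreg : ∀ c ∈ lReg R, π c ∈ reg Rb := fun c hc => hsub ⟨c, hc, rfl⟩
  have h0nC : (0 : R) ∉ lReg R := fun h => hob0 (by
    have := hCreg 0 h
    rwa [map_zero] at this)
  have hker : ∀ r : R, π r = 0 ↔ r ∈ ass (lReg R) := hqker
  have h1reg : (1 : Rb) ∈ reg Rb :=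
    ⟨fun x hx => by simpa using hx, fun x hx => by simpa using hx⟩
  have hmulreg : ∀ a ∈ reg Rb, ∀ b ∈ reg Rb, a * b ∈ reg Rb := fun a ha b hb =>
    ⟨fun x hx => ha.1 x (hb.1 (x * a) (by rw [mul_assoc]; exact hx)),
     fun x hx => hb.2 x (ha.2 (b * x) (by rw [← mul_assoc]; exact hx))⟩
  -- key Ore lemma via density
  have hOreT : ∀ t : R, π t ∈ reg Rb → ∀ r : R,
      ∃ c ∈ lReg R, ∃ r' : R, c * r = r' * t := by
    intro t ht r
    obtain ⟨sb, hsb, rb', hsbe⟩ := horeb (π t) ht (π r)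
    obtain ⟨w, hw⟩ := hdense sb hsb
    obtain ⟨c₀, hc₀, hc₀e⟩ := hw
    obtain ⟨u, rfl⟩ := hqsurj w
    obtain ⟨r₀, rfl⟩ := hqsurj rb'
    have he : π (c₀ * r) = π (u * (r₀ * t)) := by
      rw [map_mul, hc₀e, mul_assoc, hsbe, map_mul, map_mul]
    have hmem : c₀ * r - u * (r₀ * t) ∈ ass (lReg R) :=
      (hker _).mp (by rw [map_sub, he, sub_self])
    obtain ⟨d, hd, hde⟩ := hmem
    rw [mul_sub] at hde
    have e3 : d * (c₀ * r) = d * (u * (r₀ * t)) := sub_eq_zero.mp hde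
    refine ⟨d * c₀, hmulC d hd c₀ hc₀, d * (u * r₀), ?_⟩
    rw [mul_assoc d c₀ r, e3, mul_assoc d (u * r₀) t, mul_assoc u r₀ t]
  have hDenT : ∀ r t : R, π t ∈ reg Rb → r * t = 0 → ∃ d ∈ lReg R, d * r = 0 := by
    intro r t ht hrt
    have h0 : π r * π t = 0 := by rw [← map_mul, hrt, map_zero]
    exact (hker r).mp (ht.1 (π r) h0)
  -- 'C is a left denominator set
  have hMulC : IsMulSet (lReg R) := ⟨h1C, hmulC, h0nC⟩
  have horeC : ∀ s ∈ lReg R, ∀ r : R, ∃ s' ∈ lReg R, ∃ r' : R, s' * r = r' * s :=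
    fun s hs r => hOreT s (hCreg s hs) r
  have hDenC : IsLeftDenom (lReg R) :=
    ⟨⟨hMulC, horeC⟩, fun r s hs hrs => hDenT r s (hCreg s hs) hrs⟩
  -- T = π⁻¹(reg Rb) is a left denominator set with ass = a
  have hCsubT : lReg R ⊆ π ⁻¹' reg Rb := fun c hc => hCreg c hc
  have hMulT : IsMulSet (π ⁻¹' reg Rb) := by
    refine ⟨?_, ?_, ?_⟩
    · show π 1 ∈ reg Rb; rw [map_one]; exact h1reg
    · intro a ha b hb; show π (a * b) ∈ reg Rb; rw [map_mul]; exact hmulreg _ ha _ hb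
    · intro h; exact hob0 (by rwa [Set.mem_preimage, map_zero] at h)
  have hDenTset : IsLeftDenom (π ⁻¹' reg Rb) := by
    refine ⟨⟨hMulT, fun s hs r => ?_⟩, fun r s hs hrs => ?_⟩
    · obtain ⟨c, hc, r', h⟩ := hOreT s hs r
      exact ⟨c, hCsubT hc, r', h⟩
    · obtain ⟨d, hd, h⟩ := hDenT r s hs hrs
      exact ⟨d, hCsubT hd, h⟩
  have hassT : ass (π ⁻¹' reg Rb) = ass (lReg R) := by
    ext r
    constructor
    · rintro ⟨t, ht, hte⟩
      have h0 : π t * π r = 0 := by rw [← map_mul, hte, map_zero]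
      exact (hker r).mp (ht.2 (π r) h0)
    · rintro ⟨c, hc, hce⟩
      exact ⟨c, hCsubT hc, hce⟩
  -- 'C̄ = π '' 'C is a left denominator set with ass = 0
  have h0nCb : (0 : Rb) ∉ π '' lReg R := by
    rintro ⟨c, hc, hce⟩
    obtain ⟨d, hd, hdc⟩ := (hker c).mp hce
    exact h0nC ((hc d hdc) ▸ hd)
  have hMulCb : IsMulSet (π '' lReg R) := by
    refine ⟨⟨1, h1C, map_one π⟩, ?_, h0nCb⟩
    rintro _ ⟨a, ha, rfl⟩ _ ⟨b, hb, rfl⟩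
    exact ⟨a * b, hmulC a ha b hb, map_mul π a b⟩
  have hDenCb : IsLeftDenom (π '' lReg R) := by
    refine ⟨⟨hMulCb, ?_⟩, ?_⟩
    · rintro _ ⟨c, hc, rfl⟩ rb
      obtain ⟨r, rfl⟩ := hqsurj rb
      obtain ⟨c', hc', r', he⟩ := hOreT c (hCreg c hc) r
      exact ⟨π c', ⟨c', hc', rfl⟩, π r', by rw [← map_mul, ← map_mul, he]⟩
    · rintro rb _ ⟨c, hc, rfl⟩ h
      obtain ⟨r, rfl⟩ := hqsurj rb
      have h0 : π (r * c) = 0 := by rw [map_mul]; exact h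
      obtain ⟨d, hd, hdrc⟩ := (hker _).mp h0
      have hdr : d * r = 0 := hc (d * r) (by rw [mul_assoc]; exact hdrc)
      exact ⟨π d, ⟨d, hd, rfl⟩, by rw [← map_mul, hdr, map_zero]⟩
  have hassCb : ass (π '' lReg R) = {0} := by
    ext xb
    simp only [Set.mem_singleton_iff]
    constructor
    · rintro ⟨_, ⟨c, hc, rfl⟩, hce⟩
      obtain ⟨x, rfl⟩ := hqsurj xb
      have h0 : π (c * x) = 0 := by rw [map_mul]; exact hce
      obtain ⟨d, hd, hdcx⟩ := (hker _).mp h0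
      refine (hker x).mpr ⟨d * c, hmulC d hd c hc, ?_⟩
      rw [mul_assoc]; exact hdcx
    · rintro rfl
      exact ⟨1, ⟨1, h1C, map_one π⟩, mul_zero 1⟩
  -- ass (reg Rb) = 0
  have hassReg : ∀ xb : Rb, xb ∈ ass (reg Rb) ↔ xb = 0 := by
    intro xb
    constructor
    · rintro ⟨s, hs, hse⟩; exact hs.2 xb hse
    · rintro rfl; exact ⟨1, h1reg, mul_zero 1⟩
  refine ⟨⟨hDenC, hDenCb, hassCb⟩, ⟨hDenTset, hassT, hCsubT⟩, ?_⟩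
  intro Q1 iQ1 f1 hf1
  letI := iQ1
  refine ⟨?_, ?_, ?_⟩
  · -- 'C⁻¹R ≅ 'C̄⁻¹R̄
    intro Q2 iQ2 f2 hf2
    letI := iQ2
    have hg : IsLeftLoc (lReg R) (f2.comp π) := by
      refine ⟨fun c hc => hf2.1 (π c) ⟨c, hc, rfl⟩, ?_, ?_⟩
      · intro q
        obtain ⟨sb, hsb, rb, he⟩ := hf2.2.1 q
        obtain ⟨c, hc, rfl⟩ := hsb
        obtain ⟨r, rfl⟩ := hqsurj rb
        exact ⟨c, hc, r, he⟩
      · intro r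
        rw [show (f2.comp π) r = f2 (π r) from rfl, hf2.2.2 (π r), hassCb,
          Set.mem_singleton_iff, ← hker]
    exact locEquiv_aux (lReg R) h1C hmulC horeC f1 (f2.comp π) hf1 hg
  · -- 'C⁻¹R ≅ T⁻¹R
    intro Q3 iQ3 f3 hf3
    letI := iQ3
    have hg : IsLeftLoc (lReg R) f3 := by
      refine ⟨fun c hc => hf3.1 c (hCsubT hc), ?_, fun r => by rw [hf3.2.2 r, hassT]⟩
      intro q
      obtain ⟨t, ht, r, he⟩ := hf3.2.1 q
      obtain ⟨w, hw⟩ := hdense (π t) ht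
      obtain ⟨c, hc, hce⟩ := hw
      obtain ⟨u, rfl⟩ := hqsurj w
      have hker3 : f3 (c - u * t) = 0 := by
        refine (hf3.2.2 _).mpr ?_
        rw [hassT, ← hker, map_sub, map_mul, ← hce, sub_self]
      have hfc : f3 c = f3 u * f3 t := by
        have := sub_eq_zero.mp (by rwa [map_sub] at hker3)
        rw [this, map_mul]
      refine ⟨c, hc, u * r, ?_⟩
      rw [hfc, mul_assoc, he, ← map_mul]
    exact locEquiv_aux (lReg R) h1C hmulC horeC f1 f3 hf1 hg
  · -- 'C⁻¹R ≅ (reg Rb)⁻¹R̄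
    intro Q4 iQ4 f4 hf4
    letI := iQ4
    have hg : IsLeftLoc (lReg R) (f4.comp π) := by
      refine ⟨fun c hc => hf4.1 (π c) (hCreg c hc), ?_, ?_⟩
      · intro q
        obtain ⟨sb, hsb, rb, he⟩ := hf4.2.1 q
        obtain ⟨w, hw⟩ := hdense sb hsb
        obtain ⟨c, hc, hce⟩ := hw
        obtain ⟨u, rfl⟩ := hqsurj w
        obtain ⟨r₀, rfl⟩ := hqsurj rb
        refine ⟨c, hc, u * r₀, ?_⟩
        show f4 (π c) * q = f4 (π (u * r₀))
        rw [hce, map_mul, map_mul, mul_assoc, he, ← map_mul]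
      · intro r
        rw [show (f4.comp π) r = f4 (π r) from rfl, hf4.2.2 (π r), hassReg, ← hker]
    exact locEquiv_aux (lReg R) h1C hmulC horeC f1 (f4.comp π) hf1 hg


end Bavula
end

section
/- Let R be a ring. Then: (1) among the left denominator sets of R contained in the set 'C_R of left regular elements there exists a largest one with respect to inclusion (denoted 'S_l(R)), namely the union of all left denominator sets of R contained in 'C_R is itself a left denominator set; moreover, the largest right Ore set S_r(R) of R consisting of regular elements is the largest right denominator set of R contained in 'C_R; (2) dually, among the right denominator sets of R contained in the set C_R' of right regular elements there exists a largest one, and the largest left Ore set S_l(R) of R consisting of regular elements is the largest left denominator set of R contained in C_R'. -/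
universe u

namespace Bavula

section Aux

variable {R : Type u} [Ring R]

lemma one_mem_lReg : (1 : R) ∈ lReg R := fun x hx => by simpa using hx

lemma mul_mem_lReg {a b : R} (ha : a ∈ lReg R) (hb : b ∈ lReg R) : a * b ∈ lReg R :=
  fun x hx => ha x (hb (x * a) (by rw [mul_assoc]; exact hx))

lemma zero_not_mem_lReg [Nontrivial R] : (0 : R) ∉ lReg R :=
  fun h => one_ne_zero (h 1 (mul_zero 1))

lemma one_mem_rReg : (1 : R) ∈ rReg R := fun x hx => by simpa using hx

lemma mul_mem_rReg {a b : R} (ha : a ∈ rReg R) (hb : b ∈ rReg R) : a * b ∈ rReg R :=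
  fun x hx => hb x (ha (b * x) (by rwa [← mul_assoc]))

lemma zero_not_mem_rReg [Nontrivial R] : (0 : R) ∉ rReg R :=
  fun h => one_ne_zero (h 1 (zero_mul 1))

/-- `lReg R` as a submonoid. -/
def lRegSubmonoid (R : Type u) [Ring R] : Submonoid R where
  carrier := lReg R
  one_mem' := one_mem_lReg
  mul_mem' := fun ha hb => mul_mem_lReg ha hb

/-- `rReg R` as a submonoid. -/
def rRegSubmonoid (R : Type u) [Ring R] : Submonoid R where
  carrier := rReg R
  one_mem' := one_mem_rReg
  mul_mem' := fun ha hb => mul_mem_rReg ha hb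

lemma denom_of_lReg {S : Set R} (h : S ⊆ lReg R) :
    ∀ r : R, ∀ s ∈ S, r * s = 0 → ∃ t ∈ S, t * r = 0 := by
  intro r s hs hrs
  exact ⟨s, hs, by rw [h hs r hrs, mul_zero]⟩

lemma rdenom_of_rReg {S : Set R} (h : S ⊆ rReg R) :
    ∀ r : R, ∀ s ∈ S, s * r = 0 → ∃ t ∈ S, r * t = 0 := by
  intro r s hs hrs
  exact ⟨s, hs, by rw [h hs r hrs, zero_mul]⟩

lemma singleton_one_leftDenom [Nontrivial R] :
    IsLeftDenom ({1} : Set R) ∧ ({1} : Set R) ⊆ lReg R := by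
  have hsub : ({1} : Set R) ⊆ lReg R := by
    intro x hx; rw [Set.mem_singleton_iff] at hx; subst hx; exact one_mem_lReg
  refine ⟨⟨⟨⟨rfl, ?_, ?_⟩, ?_⟩, denom_of_lReg hsub⟩, hsub⟩
  · intro a ha b hb
    rw [Set.mem_singleton_iff] at ha hb; simp [ha, hb]
  · intro h; exact one_ne_zero (Set.mem_singleton_iff.mp h).symm
  · intro s hs r
    rw [Set.mem_singleton_iff] at hs; subst hs
    exact ⟨1, rfl, r, by rw [one_mul, mul_one]⟩

lemma singleton_one_rightDenom [Nontrivial R] :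
    IsRightDenom ({1} : Set R) ∧ ({1} : Set R) ⊆ rReg R := by
  have hsub : ({1} : Set R) ⊆ rReg R := by
    intro x hx; rw [Set.mem_singleton_iff] at hx; subst hx; exact one_mem_rReg
  refine ⟨⟨⟨⟨rfl, ?_, ?_⟩, ?_⟩, rdenom_of_rReg hsub⟩, hsub⟩
  · intro a ha b hb
    rw [Set.mem_singleton_iff] at ha hb; simp [ha, hb]
  · intro h; exact one_ne_zero (Set.mem_singleton_iff.mp h).symm
  · intro s hs r
    rw [Set.mem_singleton_iff] at hs; subst hs
    exact ⟨1, rfl, r, by rw [one_mul, mul_one]⟩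

/-- The submonoid generated by two left denominator sets of left regular elements is
again a left denominator set of left regular elements. -/
lemma closure_leftDenom [Nontrivial R] {S1 S2 : Set R}
    (h1 : IsLeftDenom S1) (hr1 : S1 ⊆ lReg R)
    (h2 : IsLeftDenom S2) (hr2 : S2 ⊆ lReg R) :
    IsLeftDenom ((Submonoid.closure (S1 ∪ S2) : Submonoid R) : Set R) ∧
    ((Submonoid.closure (S1 ∪ S2) : Submonoid R) : Set R) ⊆ lReg R := by
  set M := Submonoid.closure (S1 ∪ S2) with hM
  have hsub : (M : Set R) ⊆ lReg R := by
    intro x hx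
    exact (Submonoid.closure_le (S := lRegSubmonoid R)).mpr
      (Set.union_subset hr1 hr2) hx
  have hOre : ∀ x ∈ M, ∀ r : R, ∃ s' ∈ (M : Set R), ∃ r' : R, s' * r = r' * x := by
    intro x hx
    induction hx using Submonoid.closure_induction with
    | mem g hg =>
      intro r
      rcases hg with hg | hg
      · obtain ⟨s', hs', r', heq⟩ := h1.1.2 g hg r
        exact ⟨s', Submonoid.subset_closure (Or.inl hs'), r', heq⟩
      · obtain ⟨s', hs', r', heq⟩ := h2.1.2 g hg r
        exact ⟨s', Submonoid.subset_closure (Or.inr hs'), r', heq⟩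
    | one =>
      intro r; exact ⟨1, Submonoid.one_mem M, r, by rw [one_mul, mul_one]⟩
    | mul a b ha hb iha ihb =>
      intro r
      obtain ⟨s1, hs1, r1, heq1⟩ := ihb r
      obtain ⟨s2, hs2, r2, heq2⟩ := iha r1
      refine ⟨s2 * s1, Submonoid.mul_mem M hs2 hs1, r2, ?_⟩
      rw [mul_assoc, heq1, ← mul_assoc, heq2, mul_assoc]
  refine ⟨⟨⟨⟨Submonoid.one_mem M, fun a ha b hb => Submonoid.mul_mem M ha hb, ?_⟩,
    hOre⟩, denom_of_lReg hsub⟩, hsub⟩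
  intro h0
  exact zero_not_mem_lReg (hsub h0)

/-- Dual of `closure_leftDenom`. -/
lemma closure_rightDenom [Nontrivial R] {S1 S2 : Set R}
    (h1 : IsRightDenom S1) (hr1 : S1 ⊆ rReg R)
    (h2 : IsRightDenom S2) (hr2 : S2 ⊆ rReg R) :
    IsRightDenom ((Submonoid.closure (S1 ∪ S2) : Submonoid R) : Set R) ∧
    ((Submonoid.closure (S1 ∪ S2) : Submonoid R) : Set R) ⊆ rReg R := by
  set M := Submonoid.closure (S1 ∪ S2) with hM
  have hsub : (M : Set R) ⊆ rReg R := by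
    intro x hx
    exact (Submonoid.closure_le (S := rRegSubmonoid R)).mpr
      (Set.union_subset hr1 hr2) hx
  have hOre : ∀ x ∈ M, ∀ r : R, ∃ s' ∈ (M : Set R), ∃ r' : R, r * s' = x * r' := by
    intro x hx
    induction hx using Submonoid.closure_induction with
    | mem g hg =>
      intro r
      rcases hg with hg | hg
      · obtain ⟨s', hs', r', heq⟩ := h1.1.2 g hg r
        exact ⟨s', Submonoid.subset_closure (Or.inl hs'), r', heq⟩
      · obtain ⟨s', hs', r', heq⟩ := h2.1.2 g hg r
        exact ⟨s', Submonoid.subset_closure (Or.inr hs'), r', heq⟩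
    | one =>
      intro r; exact ⟨1, Submonoid.one_mem M, r, by rw [one_mul, mul_one]⟩
    | mul a b ha hb iha ihb =>
      intro r
      obtain ⟨s1, hs1, r1, heq1⟩ := iha r
      obtain ⟨s2, hs2, r2, heq2⟩ := ihb r1
      refine ⟨s1 * s2, Submonoid.mul_mem M hs1 hs2, r2, ?_⟩
      rw [← mul_assoc, heq1, mul_assoc, heq2, ← mul_assoc]
  refine ⟨⟨⟨⟨Submonoid.one_mem M, fun a ha b hb => Submonoid.mul_mem M ha hb, ?_⟩,
    hOre⟩, rdenom_of_rReg hsub⟩, hsub⟩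
  intro h0
  exact zero_not_mem_rReg (hsub h0)

end Aux

/-- Lemma a8Mar15: (1) among the left denominator sets contained in `'C_R` there is a
largest one, namely the union of them all; and the largest right Ore set `S_r(R)`
consisting of regular elements is the largest right denominator set contained in `'C_R`.
(2) The dual statement. -/
theorem largestLeftDenominator_in_leftRegular_exists {R : Type u} [Ring R] [Nontrivial R] :
    -- (1)
    (IsLeftDenom (⋃₀ {S : Set R | IsLeftDenom S ∧ S ⊆ lReg R}) ∧
     (⋃₀ {S : Set R | IsLeftDenom S ∧ S ⊆ lReg R}) ⊆ lReg R ∧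
     (∀ T : Set R, IsLeftDenom T → T ⊆ lReg R →
        T ⊆ ⋃₀ {S : Set R | IsLeftDenom S ∧ S ⊆ lReg R}) ∧
     (∀ Sr : Set R, IsRightOre Sr → Sr ⊆ reg R →
        (∀ T : Set R, IsRightOre T → T ⊆ reg R → T ⊆ Sr) →
        IsRightDenom Sr ∧ Sr ⊆ lReg R ∧
          ∀ D : Set R, IsRightDenom D → D ⊆ lReg R → D ⊆ Sr)) ∧
    -- (2)
    (IsRightDenom (⋃₀ {S : Set R | IsRightDenom S ∧ S ⊆ rReg R}) ∧
     (⋃₀ {S : Set R | IsRightDenom S ∧ S ⊆ rReg R}) ⊆ rReg R ∧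
     (∀ T : Set R, IsRightDenom T → T ⊆ rReg R →
        T ⊆ ⋃₀ {S : Set R | IsRightDenom S ∧ S ⊆ rReg R}) ∧
     (∀ Sl : Set R, IsLeftOre Sl → Sl ⊆ reg R →
        (∀ T : Set R, IsLeftOre T → T ⊆ reg R → T ⊆ Sl) →
        IsLeftDenom Sl ∧ Sl ⊆ rReg R ∧
          ∀ D : Set R, IsLeftDenom D → D ⊆ rReg R → D ⊆ Sl)) := by
  constructor
  · -- part (1)
    set F := {S : Set R | IsLeftDenom S ∧ S ⊆ lReg R} with hF
    have hUsub : ⋃₀ F ⊆ lReg R := by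
      rintro x ⟨S, hS, hx⟩; exact hS.2 hx
    refine ⟨⟨⟨⟨?_, ?_, fun h0 => zero_not_mem_lReg (hUsub h0)⟩, ?_⟩,
      denom_of_lReg hUsub⟩, hUsub, ?_, ?_⟩
    · exact ⟨{1}, singleton_one_leftDenom, rfl⟩
    · rintro a ⟨S1, hS1, ha⟩ b ⟨S2, hS2, hb⟩
      have hcl := closure_leftDenom hS1.1 hS1.2 hS2.1 hS2.2
      exact ⟨_, hcl, Submonoid.mul_mem _ (Submonoid.subset_closure (Or.inl ha))
        (Submonoid.subset_closure (Or.inr hb))⟩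
    · rintro s ⟨S, hS, hs⟩ r
      obtain ⟨s', hs', r', heq⟩ := hS.1.1.2 s hs r
      exact ⟨s', ⟨S, hS, hs'⟩, r', heq⟩
    · intro T hT hTs
      exact fun x hx => ⟨T, ⟨hT, hTs⟩, hx⟩
    · intro Sr hOre hreg hmax
      have hSrl : Sr ⊆ lReg R := fun x hx => (hreg hx).1
      have hSrr : Sr ⊆ rReg R := fun x hx => (hreg hx).2
      refine ⟨⟨hOre, rdenom_of_rReg hSrr⟩, hSrl, ?_⟩
      intro D hD hDl
      apply hmax D hD.1
      intro x hx
      refine ⟨hDl hx, fun y hxy => ?_⟩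
      obtain ⟨t, ht, hyt⟩ := hD.2 y x hx hxy
      exact hDl ht y hyt
  · -- part (2)
    set F := {S : Set R | IsRightDenom S ∧ S ⊆ rReg R} with hF
    have hUsub : ⋃₀ F ⊆ rReg R := by
      rintro x ⟨S, hS, hx⟩; exact hS.2 hx
    refine ⟨⟨⟨⟨?_, ?_, fun h0 => zero_not_mem_rReg (hUsub h0)⟩, ?_⟩,
      rdenom_of_rReg hUsub⟩, hUsub, ?_, ?_⟩
    · exact ⟨{1}, singleton_one_rightDenom, rfl⟩
    · rintro a ⟨S1, hS1, ha⟩ b ⟨S2, hS2, hb⟩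
      have hcl := closure_rightDenom hS1.1 hS1.2 hS2.1 hS2.2
      exact ⟨_, hcl, Submonoid.mul_mem _ (Submonoid.subset_closure (Or.inl ha))
        (Submonoid.subset_closure (Or.inr hb))⟩
    · rintro s ⟨S, hS, hs⟩ r
      obtain ⟨s', hs', r', heq⟩ := hS.1.1.2 s hs r
      exact ⟨s', ⟨S, hS, hs'⟩, r', heq⟩
    · intro T hT hTs
      exact fun x hx => ⟨T, ⟨hT, hTs⟩, hx⟩
    · intro Sl hOre hreg hmax
      have hSll : Sl ⊆ lReg R := fun x hx => (hreg hx).1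
      have hSlr : Sl ⊆ rReg R := fun x hx => (hreg hx).2
      refine ⟨⟨hOre, denom_of_lReg hSll⟩, hSlr, ?_⟩
      intro D hD hDr
      apply hmax D hD.1
      intro x hx
      refine ⟨fun y hxy => ?_, hDr hx⟩
      obtain ⟨t, ht, hyt⟩ := hD.2 y x hx hxy
      exact hDr ht y hyt


end Bavula
end

section
/- Let R be a ring, S_l(R) the largest left Ore set of R consisting of regular elements, and Q_l(R) := S_l(R)⁻¹R. Then: (1) if Q_l(R) is a left Artinian ring, then S_l(R) = C_R = 'C_R = 'S_l(R) and Q_l(R) = Q_{l,cl}(R) = 'Q_{l,cl}(R) = 'Q_l(R) is a left Artinian ring; (2) if Q_l(R) is a semisimple Artinian ring, then S_l(R) = C_R = 'C_R = 'S_l(R) and Q_l(R) = Q_{l,cl}(R) = 'Q_{l,cl}(R) = 'Q_l(R) is a semisimple Artinian ring. -/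
universe u

namespace Bavula

section Aux

/-- In a left Artinian ring, a left regular element is a unit. -/
theorem isUnit_of_lreg_artinian_s13 {A : Type u} [Ring A] [IsArtinianRing A]
    (c : A) (hc : ∀ x : A, x * c = 0 → x = 0) : IsUnit c := by
  let ρ : A →ₗ[A] A :=
    { toFun := fun x => x * c
      map_add' := fun a b => add_mul a b c
      map_smul' := fun a b => by simp [mul_assoc] }
  have hinj : Function.Injective ρ := by
    intro a b h
    simp only [ρ, LinearMap.coe_mk, AddHom.coe_mk] at h
    have h2 : (a - b) * c = 0 := by rw [sub_mul, h, sub_self]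
    exact sub_eq_zero.mp (hc _ h2)
  obtain ⟨u, hu⟩ := IsArtinian.surjective_of_injective_endomorphism ρ hinj 1
  have hu' : u * c = 1 := hu
  have hcu : c * u = 1 := by
    have h3 : (c * u - 1) * c = 0 := by
      rw [sub_mul, one_mul, mul_assoc, hu', mul_one, sub_self]
    have := hc _ h3
    exact sub_eq_zero.mp this
  exact ⟨⟨c, u, hcu, hu'⟩, rfl⟩

/-- Uniqueness of the left localization at a left Ore set of regular elements. -/
theorem loc_unique_s13 {R : Type u} [Ring R] (S : Set R) (hOre : IsLeftOre S)
    (hreg : S ⊆ reg R) {Q1 Q2 : Type u} [Ring Q1] [Ring Q2]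
    (f1 : R →+* Q1) (f2 : R →+* Q2)
    (h1 : IsLeftLoc S f1) (h2 : IsLeftLoc S f2) : Nonempty (Q1 ≃+* Q2) := by
  classical
  have hinj1 : ∀ r : R, f1 r = 0 → r = 0 := by
    intro r h
    obtain ⟨s, hs, h0⟩ := (h1.2.2 r).mp h
    exact (hreg hs).2 r h0
  have hinj2 : ∀ r : R, f2 r = 0 → r = 0 := by
    intro r h
    obtain ⟨s, hs, h0⟩ := (h2.2.2 r).mp h
    exact (hreg hs).2 r h0
  set P : Q1 → Q2 → Prop :=
    fun q x => ∃ s ∈ S, ∃ r : R, f1 s * q = f1 r ∧ f2 s * x = f2 r with hPdef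
  have hcan1 : ∀ s ∈ S, ∀ x y : Q1, f1 s * x = f1 s * y → x = y := fun s hs x y h =>
    (h1.1 s hs).mul_left_cancel h
  have hcan2 : ∀ s ∈ S, ∀ x y : Q2, f2 s * x = f2 s * y → x = y := fun s hs x y h =>
    (h2.1 s hs).mul_left_cancel h
  have hex : ∀ q : Q1, ∃ x : Q2, P q x := by
    intro q
    obtain ⟨s, hs, r, hr⟩ := h1.2.1 q
    refine ⟨↑(h2.1 s hs).unit⁻¹ * f2 r, s, hs, r, hr, ?_⟩
    rw [← mul_assoc]
    nth_rewrite 1 [← (h2.1 s hs).unit_spec]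
    rw [Units.mul_inv, one_mul]
  have hex' : ∀ x : Q2, ∃ q : Q1, P q x := by
    intro x
    obtain ⟨s, hs, r, hr⟩ := h2.2.1 x
    refine ⟨↑(h1.1 s hs).unit⁻¹ * f1 r, s, hs, r, ?_, hr⟩
    rw [← mul_assoc]
    nth_rewrite 1 [← (h1.1 s hs).unit_spec]
    rw [Units.mul_inv, one_mul]
  have huniq : ∀ (q : Q1) (x x' : Q2), P q x → P q x' → x = x' := by
    rintro q x x' ⟨s, hs, r, h1r, h2r⟩ ⟨s', hs', r', h1r', h2r'⟩
    obtain ⟨t, ht, a, hta⟩ := hOre.2 s hs s'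
    have hts' : t * s' ∈ S := hOre.1.2.1 t ht s' hs'
    have e1 : f1 (t * r') = f1 (a * r) := by
      rw [map_mul, map_mul, ← h1r', ← h1r, ← mul_assoc, ← mul_assoc, ← map_mul, ← map_mul, hta]
    have e2 : t * r' = a * r :=
      sub_eq_zero.mp (hinj1 _ (by rw [map_sub, e1, sub_self]))
    refine (hcan2 _ hts' x' x ?_).symm
    calc f2 (t * s') * x' = f2 t * (f2 s' * x') := by rw [map_mul, mul_assoc]
      _ = f2 (t * r') := by rw [h2r', ← map_mul]
      _ = f2 (a * r) := by rw [e2]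
      _ = f2 a * (f2 s * x) := by rw [map_mul, h2r]
      _ = f2 (a * s) * x := by rw [map_mul, mul_assoc]
      _ = f2 (t * s') * x := by rw [hta]
  have huniq' : ∀ (x : Q2) (q q' : Q1), P q x → P q' x → q = q' := by
    rintro x q q' ⟨s, hs, r, h1r, h2r⟩ ⟨s', hs', r', h1r', h2r'⟩
    obtain ⟨t, ht, a, hta⟩ := hOre.2 s hs s'
    have hts' : t * s' ∈ S := hOre.1.2.1 t ht s' hs'
    have e1 : f2 (t * r') = f2 (a * r) := by
      rw [map_mul, map_mul, ← h2r', ← h2r, ← mul_assoc, ← mul_assoc, ← map_mul, ← map_mul, hta]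
    have e2 : t * r' = a * r :=
      sub_eq_zero.mp (hinj2 _ (by rw [map_sub, e1, sub_self]))
    refine (hcan1 _ hts' q' q ?_).symm
    calc f1 (t * s') * q' = f1 t * (f1 s' * q') := by rw [map_mul, mul_assoc]
      _ = f1 (t * r') := by rw [h1r', ← map_mul]
      _ = f1 (a * r) := by rw [e2]
      _ = f1 a * (f1 s * q) := by rw [map_mul, h1r]
      _ = f1 (a * s) * q := by rw [map_mul, mul_assoc]
      _ = f1 (t * s') * q := by rw [hta]
  have hPadd : ∀ q q' x x', P q x → P q' x' → P (q + q') (x + x') := by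
    rintro q q' x x' ⟨s, hs, r, h1r, h2r⟩ ⟨s', hs', r', h1r', h2r'⟩
    obtain ⟨u, hu, b, hub⟩ := hOre.2 s hs s'
    refine ⟨u * s', hOre.1.2.1 u hu s' hs', u * r' + b * r, ?_, ?_⟩
    · have t1 : f1 (u * s') * q = f1 (b * r) := by
        rw [hub, map_mul, mul_assoc, h1r, ← map_mul]
      have t2 : f1 (u * s') * q' = f1 (u * r') := by
        rw [map_mul, mul_assoc, h1r', ← map_mul]
      rw [mul_add, t1, t2, ← map_add, add_comm]
    · have t1 : f2 (u * s') * x = f2 (b * r) := by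
        rw [hub, map_mul, mul_assoc, h2r, ← map_mul]
      have t2 : f2 (u * s') * x' = f2 (u * r') := by
        rw [map_mul, mul_assoc, h2r', ← map_mul]
      rw [mul_add, t1, t2, ← map_add, add_comm]
  have hPmul : ∀ q q' x x', P q x → P q' x' → P (q * q') (x * x') := by
    rintro q q' x x' ⟨s, hs, r, h1r, h2r⟩ ⟨s', hs', r', h1r', h2r'⟩
    obtain ⟨t, ht, a, hta⟩ := hOre.2 s' hs' r
    refine ⟨t * s, hOre.1.2.1 t ht s hs, a * r', ?_, ?_⟩
    · calc f1 (t * s) * (q * q') = f1 t * ((f1 s * q) * q') := by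
            rw [map_mul, mul_assoc, mul_assoc]
        _ = f1 (t * r) * q' := by rw [h1r, map_mul, mul_assoc]
        _ = f1 a * (f1 s' * q') := by rw [hta, map_mul, mul_assoc]
        _ = f1 (a * r') := by rw [h1r', ← map_mul]
    · calc f2 (t * s) * (x * x') = f2 t * ((f2 s * x) * x') := by
            rw [map_mul, mul_assoc, mul_assoc]
        _ = f2 (t * r) * x' := by rw [h2r, map_mul, mul_assoc]
        _ = f2 a * (f2 s' * x') := by rw [hta, map_mul, mul_assoc]
        _ = f2 (a * r') := by rw [h2r', ← map_mul]
  let φ : Q1 → Q2 := fun q => (hex q).choose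
  let ψ : Q2 → Q1 := fun x => (hex' x).choose
  have hφ : ∀ q, P q (φ q) := fun q => (hex q).choose_spec
  have hψ : ∀ x, P (ψ x) x := fun x => (hex' x).choose_spec
  exact ⟨RingEquiv.mk
    ⟨φ, ψ, fun q => huniq' (φ q) (ψ (φ q)) q (hψ (φ q)) (hφ q),
      fun x => huniq (ψ x) (φ (ψ x)) x (hφ (ψ x)) (hψ x)⟩
    (fun q q' => huniq (q * q') _ _ (hφ _) (hPmul _ _ _ _ (hφ q) (hφ q')))
    (fun q q' => huniq (q + q') _ _ (hφ _) (hPadd _ _ _ _ (hφ q) (hφ q')))⟩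

end Aux

/-- Lemma b8Mar15: if the largest left quotient ring `Q_l(R) = S_l(R)⁻¹R` is left
Artinian (resp. semisimple Artinian) then `S_l(R) = C_R = 'C_R = 'S_l(R)` and
`Q_l(R) = Q_{l,cl}(R) = 'Q_{l,cl}(R) = 'Q_l(R)` is left Artinian (resp. semisimple
Artinian). Here `Sl` is `S_l(R)`, `Sd` is `'S_l(R)` and `Ql = Q_l(R)`. -/
theorem largestLeftQuotient_artinian_consequences {R : Type u} [Ring R]
    (Sl : Set R) (hOre : IsLeftOre Sl) (hSlsub : Sl ⊆ reg R)
    (hSlmax : ∀ T : Set R, IsLeftOre T → T ⊆ reg R → T ⊆ Sl)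
    (Sd : Set R) (hd : IsLeftDenom Sd) (hdsub : Sd ⊆ lReg R)
    (hdmax : ∀ T : Set R, IsLeftDenom T → T ⊆ lReg R → T ⊆ Sd)
    (Ql : Type u) [Ring Ql] (fl : R →+* Ql) (hloc : IsLeftLoc Sl fl) :
    -- (1)
    (IsArtinianRing Ql →
      Sl = reg R ∧ reg R = lReg R ∧ lReg R = Sd ∧
      IsLeftOre (reg R) ∧ IsLeftDenom (lReg R) ∧
      ∀ (Q2 : Type u) (_ : Ring Q2) (f2 : R →+* Q2), IsLeftLoc (reg R) f2 →
        Nonempty (Ql ≃+* Q2) ∧ IsArtinianRing Q2) ∧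
    -- (2)
    (IsSemisimpleRing Ql →
      Sl = reg R ∧ reg R = lReg R ∧ lReg R = Sd ∧
      IsLeftOre (reg R) ∧ IsLeftDenom (lReg R) ∧
      ∀ (Q2 : Type u) (_ : Ring Q2) (f2 : R →+* Q2), IsLeftLoc (reg R) f2 →
        Nonempty (Ql ≃+* Q2) ∧ IsSemisimpleRing Q2) := by
  classical
  have hinj : ∀ r : R, fl r = 0 → r = 0 := by
    intro r h
    obtain ⟨s, hs, h0⟩ := (hloc.2.2 r).mp h
    exact (hSlsub hs).2 r h0
  have hQlnontriv : (0 : Ql) ≠ 1 := by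
    intro h
    have h1 : fl 1 = 0 := by rw [map_one, ← h]
    have h10 : (1 : R) = 0 := hinj _ h1
    exact hOre.1.2.2 (h10 ▸ hOre.1.1)
  have hSl_lReg : Sl ⊆ lReg R := fun s hs => (hSlsub hs).1
  -- the key step: in the Artinian case every left regular element belongs to Sl
  have key : IsArtinianRing Ql → lReg R ⊆ Sl := by
    intro hArt
    haveI := hArt
    set T : Set R := {r : R | IsUnit (fl r)} with hT
    have hTreg : T ⊆ reg R := by
      intro r hr
      constructor
      · intro x hx
        have hx0 : fl x * fl r = 0 * fl r := by
          rw [← map_mul, hx, map_zero, zero_mul]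
        exact hinj _ (hr.mul_right_cancel hx0)
      · intro x hx
        have hx0 : fl r * fl x = fl r * 0 := by
          rw [← map_mul, hx, map_zero, mul_zero]
        exact hinj _ (hr.mul_left_cancel hx0)
    have hTore : IsLeftOre T := by
      refine ⟨⟨?_, ?_, ?_⟩, ?_⟩
      · show IsUnit (fl 1); rw [map_one]; exact isUnit_one
      · intro a ha b hb
        show IsUnit (fl (a * b)); rw [map_mul]; exact ha.mul hb
      · intro h0
        have : IsUnit (fl 0) := h0
        rw [map_zero] at this
        exact hQlnontriv (isUnit_zero_iff.mp this)
      · intro s hs r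
        obtain ⟨t, ht, a, hta⟩ := hloc.2.1 (fl r * ↑hs.unit⁻¹)
        refine ⟨t, hloc.1 t ht, a, ?_⟩
        have e1 : fl t * fl r = fl a * fl s := by
          have := congrArg (· * fl s) hta
          rw [mul_assoc, mul_assoc] at this
          rw [← this, hs.val_inv_mul, mul_one]
        have : fl (t * r - a * s) = 0 := by
          rw [map_sub, map_mul, map_mul, e1, sub_self]
        exact sub_eq_zero.mp (hinj _ this)
    have hTSl : T ⊆ Sl := hSlmax T hTore hTreg
    intro c hc
    apply hTSl
    show IsUnit (fl c)
    apply isUnit_of_lreg_artinian_s13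
    intro y hy
    obtain ⟨s, hs, r, hr⟩ := hloc.2.1 y
    have hrc : fl (r * c) = 0 := by
      rw [map_mul, ← hr, mul_assoc, hy, mul_zero]
    have hr0 : r = 0 := hc r (hinj _ hrc)
    have hsy : fl s * y = fl s * 0 := by
      rw [hr, hr0, map_zero, mul_zero]
    exact (hloc.1 s hs).mul_left_cancel hsy
  -- the common core
  have core : IsArtinianRing Ql →
      Sl = reg R ∧ reg R = lReg R ∧ lReg R = Sd ∧ IsLeftOre (reg R) ∧
      IsLeftDenom (lReg R) ∧
      ∀ (Q2 : Type u) (_ : Ring Q2) (f2 : R →+* Q2), IsLeftLoc (reg R) f2 →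
        Nonempty (Ql ≃+* Q2) := by
    intro hArt
    have hkey := key hArt
    have h1 : Sl = reg R :=
      Set.Subset.antisymm hSlsub (fun c hc => hkey hc.1)
    have h2 : reg R = lReg R :=
      Set.Subset.antisymm Set.inter_subset_left (fun c hc => hSlsub (hkey hc))
    have hLS : lReg R = Sl := Set.Subset.antisymm hkey hSl_lReg
    have hSlDenom : IsLeftDenom Sl := by
      refine ⟨hOre, fun r s hs h => ⟨1, hOre.1.1, ?_⟩⟩
      rw [one_mul, (hSlsub hs).1 r h]
    have h3 : lReg R = Sd :=
      Set.Subset.antisymm (fun c hc => hdmax Sl hSlDenom hSl_lReg (hkey hc)) hdsub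
    refine ⟨h1, h2, h3, by rw [← h1]; exact hOre, by rw [hLS]; exact hSlDenom, ?_⟩
    intro Q2 i2 f2 hf2
    rw [← h1] at hf2
    exact loc_unique_s13 Sl hOre hSlsub fl f2 hloc hf2
  constructor
  · intro hA
    obtain ⟨h1, h2, h3, h4, h5, h6⟩ := core hA
    refine ⟨h1, h2, h3, h4, h5, fun Q2 i2 f2 hf2 => ?_⟩
    obtain ⟨e⟩ := h6 Q2 i2 f2 hf2
    haveI := hA
    exact ⟨⟨e⟩, Function.Surjective.isArtinianRing (f := e.toRingHom)
      (fun y => ⟨e.symm y, e.apply_symm_apply y⟩)⟩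
  · intro hss
    haveI := hss
    have hA : IsArtinianRing Ql := inferInstance
    obtain ⟨h1, h2, h3, h4, h5, h6⟩ := core hA
    refine ⟨h1, h2, h3, h4, h5, fun Q2 i2 f2 hf2 => ?_⟩
    obtain ⟨e⟩ := h6 Q2 i2 f2 hf2
    exact ⟨⟨e⟩, e.isSemisimpleRing⟩

end Bavula
end
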